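/- arXiv:2108.04732 — 3 statements merged into one kernel-verified Lean document; each statement's English description precedes it below -/
import Mathlib

section
/- With the above notation: (a) if i∈I^re then for all x,y∈ℱ one has (yf_{i1},x)_L=(f_{i1},f_{i1})_L·(y,ϱ_i(x))_L and (f_{i1}y,x)_L=(f_{i1},f_{i1})_L·(y,ϱ^i(x))_L; (b) if i∈I^im, l≥1 and x∈ℱ has ϱ_{i,l}(x)=(x_{𝐜})_{𝐜} and ϱ^{i,l}(x)=(x'_{𝐜})_{𝐜} (𝐜 running over compositions of l), then for all y∈ℱ one has (yf_{il},x)_L=Σ_{𝐜}(f_{il},f_{i,𝐜})_L(y,x_{𝐜})_L and (f_{il}y,x)_L=Σ_{𝐜}(f_{il},f_{i,𝐜})_L(y,x'_{𝐜})_L; (c) if x∈ℱ is homogeneous with |x|≠0 and every component of ϱ_{i,l}(x) lies in ℛ for all (i,l)∈I^∞, then x∈ℛ; likewise if every component of ϱ^{i,l}(x) lies in ℛ for all (i,l)∈I^∞, then x∈ℛ. -/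
/- Setting: quantum Borcherds-Bozec algebras (Fan–Kang–Kim–Tolmachov, arXiv:2108.04732).
   Common framework for the free algebra ℱ over ℚ(q) with its Q₋-grading and
   twisted comultiplication ϱ. -/

open scoped TensorProduct

noncomputable section

/-- The base field ℚ(q). -/
abbrev KQ : Type := RatFunc ℚ

/-- The indeterminate q. -/
abbrev qq : KQ := RatFunc.X

/-- An even symmetrizable Borcherds–Cartan matrix together with its symmetrizing
integers `r i > 0`. -/
structure BCMatrix (I : Type*) where
  a : I → I → ℤ
  r : I → ℤ
  r_pos : ∀ i, 0 < r i
  symmetrizable : ∀ i j, r i * a i j = r j * a j i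
  diag : ∀ i, a i i = 2 ∨ (a i i ≤ 0 ∧ Even (a i i))
  offdiag : ∀ i j, i ≠ j → a i j ≤ 0

namespace BCMatrix

variable {I : Type*} (A : BCMatrix I)

/-- `(i,l) ∈ I^∞ = (I^re × {1}) ∪ (I^im × ℤ_{>0})`. -/
def validIdx (i : I) (l : ℕ) : Prop :=
  (A.a i i = 2 ∧ l = 1) ∨ (A.a i i ≤ 0 ∧ 1 ≤ l)

/-- The index set `I^∞`. -/
def Iinf := {p : I × ℕ // A.validIdx p.1 p.2}

/-- The free associative algebra `ℱ = ℚ(q)⟨f_{il} : (i,l) ∈ I^∞⟩`. -/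
abbrev FA := FreeAlgebra KQ A.Iinf

/-- The generators `f_{il}` of `ℱ`, with the conventions `f_{i0} = 1` and
`f_{il} = 0` for `(i,l)` out of range. -/
def gen (i : I) (l : ℕ) : A.FA :=
  letI := Classical.propDecidable (A.validIdx i l)
  if h : A.validIdx i l then FreeAlgebra.ι KQ (⟨(i,l), h⟩ : A.Iinf)
  else if l = 0 then 1 else 0

/-- The symmetric bilinear form on the root lattice `Q = ⊕ ℤ α_i`,
`(α_i, α_j) = r_i a_{ij}`. -/
def rootForm (β γ : I →₀ ℤ) : ℤ :=
  β.sum fun i m => γ.sum fun j n => m * n * (A.r i * A.a i j)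

/-- Degree of a word in the generators: `deg f_{il} = -l α_i`. -/
def wordDeg (w : List A.Iinf) : I →₀ ℤ :=
  (w.map fun p => Finsupp.single p.1.1 (-(p.1.2 : ℤ))).sum

/-- The weight space `ℱ_β`: the span of the words of degree `β`. -/
def weightSpace (β : I →₀ ℤ) : Submodule KQ A.FA :=
  Submodule.span KQ {x | ∃ w : List A.Iinf, A.wordDeg w = β ∧
    x = (w.map (FreeAlgebra.ι KQ)).prod}

/-- `q_i = q^{r_i}`. -/
def qi (i : I) : KQ := qq ^ (A.r i)

/-- `q_{(i)} = q^{(α_i,α_i)/2}`. -/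
def qsh (i : I) : KQ := qq ^ ((A.r i * A.a i i) / 2)

/-- The quantum integer `[n]_i`. -/
def qint (i : I) (n : ℕ) : KQ :=
  (A.qi i ^ (n : ℤ) - A.qi i ^ (-(n : ℤ))) / (A.qi i - (A.qi i)⁻¹)

/-- The quantum factorial `[n]_i!`. -/
def qfact (i : I) (n : ℕ) : KQ := ∏ k ∈ Finset.range n, A.qint i (k + 1)

/-- The divided power `f_i^{(n)} = f_{i1}^n/[n]_i!`. -/
def fdpow (i : I) (n : ℕ) : A.FA := (A.qfact i n)⁻¹ • (A.gen i 1) ^ n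

/-- For `i ∈ I^im` and a composition `𝐜 = (c₁,…,c_t)` of `l`,
`f_{i,𝐜} = f_{ic₁} ⋯ f_{ic_t}`. -/
def fcomp (i : I) {l : ℕ} (c : Composition l) : A.FA :=
  (c.blocks.map (A.gen i)).prod

end BCMatrix

/-- The comultiplication data on `ℱ`: the twisted multiplication on `ℱ ⊗ ℱ`
(`(x₁⊗x₂)(y₁⊗y₂) = q^{-(|x₂|,|y₁|)} x₁y₁ ⊗ x₂y₂`) and the algebra homomorphism
`ϱ : ℱ → ℱ ⊗ ℱ` with `ϱ(f_{il}) = Σ_{m+n=l} q_{(i)}^{-mn} f_{im} ⊗ f_{in}`. -/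
structure CoMult {I : Type*} (A : BCMatrix I) where
  tmul : (A.FA ⊗[KQ] A.FA) →ₗ[KQ] (A.FA ⊗[KQ] A.FA) →ₗ[KQ] (A.FA ⊗[KQ] A.FA)
  tmul_spec : ∀ (β γ : I →₀ ℤ) (x₁ x₂ y₁ y₂ : A.FA),
    x₂ ∈ A.weightSpace β → y₁ ∈ A.weightSpace γ →
    tmul (x₁ ⊗ₜ x₂) (y₁ ⊗ₜ y₂) =
      (qq ^ (-(A.rootForm β γ))) • ((x₁ * y₁) ⊗ₜ[KQ] (x₂ * y₂))
  rho : A.FA →ₗ[KQ] (A.FA ⊗[KQ] A.FA)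
  rho_one : rho 1 = 1 ⊗ₜ[KQ] 1
  rho_mul : ∀ x y, rho (x * y) = tmul (rho x) (rho y)
  rho_gen : ∀ i l, A.validIdx i l →
    rho (A.gen i l) = ∑ m ∈ Finset.range (l + 1),
      (A.qsh i ^ (-((m : ℤ) * ((l : ℤ) - (m : ℤ))))) • (A.gen i m ⊗ₜ[KQ] A.gen i (l - m))

/-- Lusztig's bilinear form `( , )_L` on `ℱ`, associated with the family `ν`. -/
structure LusztigForm {I : Type*} (A : BCMatrix I) (C : CoMult A) (ν : I → ℕ → KQ) where
  B : A.FA →ₗ[KQ] A.FA →ₗ[KQ] KQ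
  symm : ∀ x y, B x y = B y x
  wt : ∀ β γ : I →₀ ℤ, β ≠ γ → ∀ x ∈ A.weightSpace β, ∀ y ∈ A.weightSpace γ, B x y = 0
  one_one : B 1 1 = 1
  gen_gen : ∀ i l, A.validIdx i l → B (A.gen i l) (A.gen i l) = ν i l
  mul_compat : ∀ x y z,
    B x (y * z) = LinearMap.BilinForm.tmul B B (C.rho x) (y ⊗ₜ[KQ] z)

/-- The radical `ℛ` of the bilinear form. -/
def LusztigForm.radical {I : Type*} {A : BCMatrix I} {C : CoMult A} {ν : I → ℕ → KQ}
    (L : LusztigForm A C ν) : Submodule KQ A.FA :=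
  LinearMap.ker L.B

namespace BCMatrix

/-- "Terms of bidegree not in `Q₋ × {-lα_i}`": the span of the tensors whose second
component is homogeneous of degree `≠ -lα_i`. -/
def errLow {I : Type*} (A : BCMatrix I) (i : I) (l : ℕ) : Submodule KQ (A.FA ⊗[KQ] A.FA) :=
  Submodule.span KQ {t | ∃ γ : I →₀ ℤ, γ ≠ Finsupp.single i (-(l : ℤ)) ∧
    ∃ u : A.FA, ∃ v ∈ A.weightSpace γ, t = u ⊗ₜ[KQ] v}

/-- "Terms of bidegree not in `{-lα_i} × Q₋`": the span of the tensors whose first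
component is homogeneous of degree `≠ -lα_i`. -/
def errUp {I : Type*} (A : BCMatrix I) (i : I) (l : ℕ) : Submodule KQ (A.FA ⊗[KQ] A.FA) :=
  Submodule.span KQ {t | ∃ γ : I →₀ ℤ, γ ≠ Finsupp.single i (-(l : ℤ)) ∧
    ∃ u ∈ A.weightSpace γ, ∃ v : A.FA, t = u ⊗ₜ[KQ] v}

end BCMatrix

open scoped Classical

/-- The component maps `ϱ_{i,l}, ϱ^{i,l}` (for `i ∈ I^im`, components indexed by the
compositions of `l`) and `ϱ_i, ϱ^i` (for `i ∈ I^re`) of the comultiplication `ϱ`. -/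
structure RhoComponents {I : Type*} (A : BCMatrix I) (C : CoMult A) where
  low : (i : I) → (l : ℕ) → A.FA →ₗ[KQ] (Composition l → A.FA)
  up : (i : I) → (l : ℕ) → A.FA →ₗ[KQ] (Composition l → A.FA)
  low_spec : ∀ i l, A.a i i ≤ 0 → 1 ≤ l → ∀ x : A.FA,
    C.rho x - ∑ c : Composition l, (low i l x c) ⊗ₜ[KQ] (A.fcomp i c) ∈ A.errLow i l
  up_spec : ∀ i l, A.a i i ≤ 0 → 1 ≤ l → ∀ x : A.FA,
    C.rho x - ∑ c : Composition l, (A.fcomp i c) ⊗ₜ[KQ] (up i l x c) ∈ A.errUp i l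
  rlow : I → A.FA →ₗ[KQ] A.FA
  rup : I → A.FA →ₗ[KQ] A.FA
  rlow_one : ∀ i, A.a i i = 2 → rlow i 1 = 0
  rup_one : ∀ i, A.a i i = 2 → rup i 1 = 0
  rlow_gen : ∀ i j k, A.a i i = 2 → A.validIdx j k →
    rlow i (A.gen j k) = if j = i ∧ k = 1 then 1 else 0
  rup_gen : ∀ i j k, A.a i i = 2 → A.validIdx j k →
    rup i (A.gen j k) = if j = i ∧ k = 1 then 1 else 0
  rlow_mul : ∀ i, A.a i i = 2 → ∀ (β : I →₀ ℤ) (x y : A.FA), y ∈ A.weightSpace β →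
    rlow i (x * y) =
      (qq ^ (A.rootForm β (Finsupp.single i 1))) • (rlow i x * y) + x * rlow i y
  rup_mul : ∀ i, A.a i i = 2 → ∀ (β : I →₀ ℤ) (x y : A.FA), x ∈ A.weightSpace β →
    rup i (x * y) =
      rup i x * y + (qq ^ (A.rootForm β (Finsupp.single i 1))) • (x * rup i y)

namespace RadicalAux

open Finsupp TensorProduct

variable {I : Type*} (A : BCMatrix I)

lemma not_valid_zero (i : I) : ¬ A.validIdx i 0 := by
  rintro (⟨-, h⟩ | ⟨-, h⟩) <;> omega

lemma valid_real {i : I} {l : ℕ} (h : A.validIdx i l) (h2 : A.a i i = 2) : l = 1 := by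
  rcases h with ⟨-, h⟩ | ⟨ha, -⟩
  · exact h
  · omega

lemma gen_of_valid {i : I} {l : ℕ} (h : A.validIdx i l) :
    A.gen i l = FreeAlgebra.ι KQ (X := A.Iinf) ⟨(i, l), h⟩ := by
  unfold BCMatrix.gen; exact dif_pos h

lemma gen_zero (i : I) : A.gen i 0 = 1 := by
  rw [BCMatrix.gen, dif_neg (not_valid_zero A i), if_pos rfl]

lemma wordDeg_nil : A.wordDeg ([] : List A.Iinf) = 0 := rfl

lemma wordDeg_cons (p : A.Iinf) (t : List A.Iinf) :
    A.wordDeg (p :: t) = Finsupp.single p.1.1 (-(p.1.2 : ℤ)) + A.wordDeg t := by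
  simp [BCMatrix.wordDeg]

lemma wordDeg_append (w₁ w₂ : List A.Iinf) :
    A.wordDeg (w₁ ++ w₂) = A.wordDeg w₁ + A.wordDeg w₂ := by
  simp [BCMatrix.wordDeg]

lemma word_mem (w : List A.Iinf) :
    (w.map (FreeAlgebra.ι KQ)).prod ∈ A.weightSpace (A.wordDeg w) :=
  Submodule.subset_span ⟨w, rfl, rfl⟩

lemma one_mem_wS : (1 : A.FA) ∈ A.weightSpace 0 := word_mem A []

lemma mem_wS_congr {β γ : I →₀ ℤ} {x : A.FA} (h : x ∈ A.weightSpace β) (e : β = γ) :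
    x ∈ A.weightSpace γ := e ▸ h

lemma gen_mem_wS (i : I) (l : ℕ) :
    A.gen i l ∈ A.weightSpace (Finsupp.single i (-(l : ℤ))) := by
  by_cases h : A.validIdx i l
  · rw [gen_of_valid A h]
    refine Submodule.subset_span ⟨[⟨(i, l), h⟩], ?_, (mul_one _).symm⟩
    simp [BCMatrix.wordDeg]
    exact add_zero _
  · rcases Nat.eq_zero_or_pos l with rfl | hl
    · rw [gen_zero A i]
      exact mem_wS_congr A (one_mem_wS A) (by simp)
    · rw [BCMatrix.gen, dif_neg h, if_neg (by omega)]
      exact Submodule.zero_mem _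
  
lemma wS_mul {β γ : I →₀ ℤ} {x y : A.FA} (hx : x ∈ A.weightSpace β)
    (hy : y ∈ A.weightSpace γ) : x * y ∈ A.weightSpace (β + γ) := by
  induction hx using Submodule.span_induction with
  | mem a ha =>
    obtain ⟨w, hw, rfl⟩ := ha
    induction hy using Submodule.span_induction with
    | mem b hb =>
      obtain ⟨w', hw', rfl⟩ := hb
      exact Submodule.subset_span
        ⟨w ++ w', by rw [wordDeg_append, hw, hw'], by rw [List.map_append, List.prod_append]⟩
    | zero => simp
    | add b c _ _ hb hc => rw [mul_add]; exact add_mem hb hc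
    | smul r b _ hb => rw [mul_smul_comm]; exact Submodule.smul_mem _ _ hb
  | zero => simp
  | add a b _ _ ha hb => rw [add_mul]; exact add_mem ha hb
  | smul r a _ ha => rw [smul_mul_assoc]; exact Submodule.smul_mem _ _ ha

lemma span_words (x : A.FA) : x ∈ Submodule.span KQ
    {y : A.FA | ∃ w : List A.Iinf, y = (w.map (FreeAlgebra.ι KQ)).prod} := by
  induction x using FreeAlgebra.induction with
  | grade0 r =>
    rw [Algebra.algebraMap_eq_smul_one]
    exact Submodule.smul_mem _ _ (Submodule.subset_span ⟨[], by simp⟩)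
  | grade1 v => exact Submodule.subset_span ⟨[v], by simp⟩
  | add x y hx hy => exact add_mem hx hy
  | mul x y hx hy =>
    induction hx using Submodule.span_induction with
    | mem a ha =>
      obtain ⟨w, rfl⟩ := ha
      induction hy using Submodule.span_induction with
      | mem b hb =>
        obtain ⟨w', rfl⟩ := hb
        exact Submodule.subset_span ⟨w ++ w', by rw [List.map_append, List.prod_append]⟩
      | zero => simp
      | add b c _ _ hb hc => rw [mul_add]; exact add_mem hb hc
      | smul r b _ hb => rw [mul_smul_comm]; exact Submodule.smul_mem _ _ hb
    | zero => simp
    | add a b _ _ ha hb => rw [add_mul]; exact add_mem ha hb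
    | smul r a _ ha => rw [smul_mul_assoc]; exact Submodule.smul_mem _ _ ha

lemma rootForm_zero_left (β : I →₀ ℤ) : A.rootForm 0 β = 0 := by
  simp [BCMatrix.rootForm]

lemma rootForm_zero_right (β : I →₀ ℤ) : A.rootForm β 0 = 0 := by
  simp [BCMatrix.rootForm]

lemma rootForm_single_right (β : I →₀ ℤ) (i : I) (c : ℤ) :
    A.rootForm β (Finsupp.single i c) = c * A.rootForm β (Finsupp.single i 1) := by
  unfold BCMatrix.rootForm
  rw [Finsupp.mul_sum]
  refine Finsupp.sum_congr ?_
  intro j _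
  rw [Finsupp.sum_single_index (by simp), Finsupp.sum_single_index (by simp)]
  ring

lemma rootForm_single_left (i : I) (c : ℤ) (β : I →₀ ℤ) :
    A.rootForm (Finsupp.single i c) β = c * A.rootForm β (Finsupp.single i 1) := by
  unfold BCMatrix.rootForm
  rw [Finsupp.sum_single_index (by simp), Finsupp.mul_sum]
  refine Finsupp.sum_congr ?_
  intro j _
  rw [Finsupp.sum_single_index (by simp)]
  rw [A.symmetrizable i j]
  ring

lemma ne_of_coord {β γ : I →₀ ℤ} (j : I) (h : β j ≠ γ j) : β ≠ γ := fun e => h (by rw [e])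

lemma single_nonpos (j : I) {c : ℤ} (hc : c ≤ 0) : ∀ j', (Finsupp.single j c) j' ≤ 0 := by
  intro j'
  rw [Finsupp.single_apply]
  split <;> omega

lemma add_nonpos' {β γ : I →₀ ℤ} (hβ : ∀ j, β j ≤ 0) (hγ : ∀ j, γ j ≤ 0) :
    ∀ j, (β + γ) j ≤ 0 := by
  intro j
  have := hβ j; have := hγ j
  simp only [Finsupp.add_apply]
  omega

lemma sum_ne {i : I} {δ γ : I →₀ ℤ} (hδ : ∀ j, δ j ≤ 0) (hγ : ∀ j, γ j ≤ 0)
    (h0 : γ ≠ 0) (h1 : γ ≠ Finsupp.single i (-1)) :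
    δ + γ ≠ 0 ∧ δ + γ ≠ Finsupp.single i (-1) := by
  constructor
  · intro h
    apply h0
    ext j
    have hj := DFunLike.congr_fun h j
    have := hδ j; have := hγ j
    simp only [Finsupp.add_apply, Finsupp.coe_zero, Pi.zero_apply] at hj ⊢
    omega
  · intro h
    by_cases hi : γ i = -1
    · apply h1
      ext j
      have hj := DFunLike.congr_fun h j
      have := hδ j; have := hγ j
      simp only [Finsupp.add_apply, Finsupp.single_apply] at hj ⊢
      by_cases e : i = j
      · subst e; simp only [if_pos rfl] at hj ⊢; omega
      · simp only [if_neg e] at hj ⊢; omega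
    · apply h0
      ext j
      have hj := DFunLike.congr_fun h j
      have := hδ j; have := hγ j
      simp only [Finsupp.add_apply, Finsupp.single_apply, Finsupp.coe_zero,
        Pi.zero_apply] at hj ⊢
      by_cases e : i = j
      · subst e; simp only [if_pos rfl] at hj; omega
      · simp only [if_neg e] at hj; omega

end RadicalAux

namespace RadicalAux

variable {I : Type*} (A : BCMatrix I)

/-- Homogeneous error terms for the lower component maps. -/
def Elow (i : I) : Submodule KQ (A.FA ⊗[KQ] A.FA) :=
  Submodule.span KQ {t | ∃ (γ δ : I →₀ ℤ) (u v : A.FA), u ∈ A.weightSpace δ ∧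
    v ∈ A.weightSpace γ ∧ (∀ j, γ j ≤ 0) ∧ γ ≠ 0 ∧ γ ≠ Finsupp.single i (-1) ∧
    t = u ⊗ₜ[KQ] v}

/-- Homogeneous error terms for the upper component maps. -/
def Eup (i : I) : Submodule KQ (A.FA ⊗[KQ] A.FA) :=
  Submodule.span KQ {t | ∃ (γ δ : I →₀ ℤ) (u v : A.FA), u ∈ A.weightSpace γ ∧
    v ∈ A.weightSpace δ ∧ (∀ j, γ j ≤ 0) ∧ γ ≠ 0 ∧ γ ≠ Finsupp.single i (-1) ∧
    t = u ⊗ₜ[KQ] v}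

lemma mem_Elow {i : I} {γ δ : I →₀ ℤ} {u v : A.FA} (hu : u ∈ A.weightSpace δ)
    (hv : v ∈ A.weightSpace γ) (h1 : ∀ j, γ j ≤ 0) (h2 : γ ≠ 0)
    (h3 : γ ≠ Finsupp.single i (-1)) : u ⊗ₜ[KQ] v ∈ Elow A i :=
  Submodule.subset_span ⟨γ, δ, u, v, hu, hv, h1, h2, h3, rfl⟩

lemma mem_Eup {i : I} {γ δ : I →₀ ℤ} {u v : A.FA} (hu : u ∈ A.weightSpace γ)
    (hv : v ∈ A.weightSpace δ) (h1 : ∀ j, γ j ≤ 0) (h2 : γ ≠ 0)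
    (h3 : γ ≠ Finsupp.single i (-1)) : u ⊗ₜ[KQ] v ∈ Eup A i :=
  Submodule.subset_span ⟨γ, δ, u, v, hu, hv, h1, h2, h3, rfl⟩

lemma tmul_Elow (C : CoMult A) {i : I} {a b : A.FA} {δa δb : I →₀ ℤ}
    (ha : a ∈ A.weightSpace δa) (hb : b ∈ A.weightSpace δb) (hδb : ∀ j, δb j ≤ 0)
    {e : A.FA ⊗[KQ] A.FA} (he : e ∈ Elow A i) :
    C.tmul (a ⊗ₜ[KQ] b) e ∈ Elow A i := by
  induction he using Submodule.span_induction with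
  | mem t ht =>
    obtain ⟨γ, δ, u, v, hu, hv, h1, h2, h3, rfl⟩ := ht
    rw [C.tmul_spec δb δ a b u v hb hu]
    obtain ⟨hne0, hnes⟩ := sum_ne hδb h1 h2 h3
    exact Submodule.smul_mem _ _
      (mem_Elow A (wS_mul A ha hu) (wS_mul A hb hv) (add_nonpos' hδb h1) hne0 hnes)
  | zero => simp
  | add x y _ _ hx hy => rw [map_add]; exact add_mem hx hy
  | smul r x _ hx => rw [map_smul]; exact Submodule.smul_mem _ _ hx

lemma tmul_Eup (C : CoMult A) {i : I} {a b : A.FA} {δa δb : I →₀ ℤ}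
    (ha : a ∈ A.weightSpace δa) (hδa : ∀ j, δa j ≤ 0) (hb : b ∈ A.weightSpace δb)
    {e : A.FA ⊗[KQ] A.FA} (he : e ∈ Eup A i) :
    C.tmul (a ⊗ₜ[KQ] b) e ∈ Eup A i := by
  induction he using Submodule.span_induction with
  | mem t ht =>
    obtain ⟨γ, δ, u, v, hu, hv, h1, h2, h3, rfl⟩ := ht
    rw [C.tmul_spec δb γ a b u v hb hu]
    obtain ⟨hne0, hnes⟩ := sum_ne hδa h1 h2 h3
    exact Submodule.smul_mem _ _
      (mem_Eup A (wS_mul A ha hu) (wS_mul A hb hv) (add_nonpos' hδa h1) hne0 hnes)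
  | zero => simp
  | add x y _ _ hx hy => rw [map_add]; exact add_mem hx hy
  | smul r x _ hx => rw [map_smul]; exact Submodule.smul_mem _ _ hx

end RadicalAux

namespace RadicalAux

variable {I : Type*} (A : BCMatrix I)

lemma rho_low (C : CoMult A) (R : RhoComponents A C) (i : I) (hi : A.a i i = 2)
    (w : List A.Iinf) :
    R.rlow i ((w.map (FreeAlgebra.ι KQ)).prod)
        ∈ A.weightSpace (A.wordDeg w + Finsupp.single i 1) ∧
    C.rho ((w.map (FreeAlgebra.ι KQ)).prod)
        - ((w.map (FreeAlgebra.ι KQ)).prod) ⊗ₜ[KQ] (1 : A.FA)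
        - (R.rlow i ((w.map (FreeAlgebra.ι KQ)).prod)) ⊗ₜ[KQ] (A.gen i 1)
      ∈ Elow A i := by
  have hg : A.gen i 1 ∈ A.weightSpace (Finsupp.single i (-1)) := by
    simpa using gen_mem_wS A i 1
  induction w with
  | nil =>
    constructor
    · simp only [List.map_nil, List.prod_nil, R.rlow_one i hi]
      exact Submodule.zero_mem _
    · simp only [List.map_nil, List.prod_nil, C.rho_one, R.rlow_one i hi,
        TensorProduct.zero_tmul, sub_zero, sub_self]
      exact Submodule.zero_mem _
  | cons p t ih =>
    obtain ⟨ihh, ihE⟩ := ih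
    obtain ⟨⟨j, k⟩, hp⟩ := p
    set x' : A.FA := (t.map (FreeAlgebra.ι KQ)).prod with hx'def
    set β' := A.wordDeg t with hβ'def
    have hxprod : ((List.cons (α := A.Iinf) ⟨(j, k), hp⟩ t).map (FreeAlgebra.ι KQ)).prod
        = A.gen j k * x' := by
      rw [gen_of_valid A hp]; rfl
    have hdeg : A.wordDeg (List.cons (α := A.Iinf) ⟨(j, k), hp⟩ t)
        = Finsupp.single j (-(k : ℤ)) + β' := wordDeg_cons A _ t
    have hx'β : x' ∈ A.weightSpace β' := word_mem A t
    set r' := R.rlow i x' with hr'def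
    set E := C.rho x' - x' ⊗ₜ[KQ] (1 : A.FA) - r' ⊗ₜ[KQ] (A.gen i 1) with hEdef
    have hrx' : C.rho x' = x' ⊗ₜ[KQ] (1 : A.FA) + r' ⊗ₜ[KQ] (A.gen i 1) + E := by
      rw [hEdef]; abel
    have hrlowx : R.rlow i (A.gen j k * x') =
        (qq ^ (A.rootForm β' (Finsupp.single i 1)))
            • ((if j = i ∧ k = 1 then (1 : A.FA) else 0) * x')
          + A.gen j k * r' := by
      rw [R.rlow_mul i hi β' _ _ hx'β, R.rlow_gen i j k hi hp]
    have hrho : C.rho (A.gen j k * x') =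
        ∑ m ∈ Finset.range (k + 1), (A.qsh j ^ (-((m : ℤ) * ((k : ℤ) - (m : ℤ))))) •
          (C.tmul (A.gen j m ⊗ₜ[KQ] A.gen j (k - m)) (x' ⊗ₜ[KQ] (1 : A.FA))
           + C.tmul (A.gen j m ⊗ₜ[KQ] A.gen j (k - m)) (r' ⊗ₜ[KQ] A.gen i 1)
           + C.tmul (A.gen j m ⊗ₜ[KQ] A.gen j (k - m)) E) := by
      rw [C.rho_mul, C.rho_gen j k hp, hrx']
      simp only [map_sum, map_smul, map_add, LinearMap.sum_apply, LinearMap.smul_apply,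
        LinearMap.add_apply, smul_add, Finset.sum_add_distrib]
    have hterm1 : C.tmul (A.gen j k ⊗ₜ[KQ] A.gen j (k - k)) (x' ⊗ₜ[KQ] (1 : A.FA))
        = (A.gen j k * x') ⊗ₜ[KQ] (1 : A.FA) := by
      rw [Nat.sub_self, gen_zero,
        C.tmul_spec 0 β' _ _ _ _ (one_mem_wS A) hx'β, rootForm_zero_left]
      simp
    have hterm2 : C.tmul (A.gen j k ⊗ₜ[KQ] A.gen j (k - k)) (r' ⊗ₜ[KQ] A.gen i 1)
        = (A.gen j k * r') ⊗ₜ[KQ] (A.gen i 1) := by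
      rw [Nat.sub_self, gen_zero,
        C.tmul_spec 0 (β' + Finsupp.single i 1) _ _ _ _ (one_mem_wS A) ihh,
        rootForm_zero_left]
      simp
    have hterm3 : C.tmul (A.gen j k ⊗ₜ[KQ] A.gen j (k - k)) E ∈ Elow A i :=
      tmul_Elow A C (gen_mem_wS A j k) (gen_mem_wS A j (k - k))
        (single_nonpos j (by omega)) ihE
    by_cases hc : j = i ∧ k = 1
    · obtain ⟨rfl, rfl⟩ := hc
      have hif : (if (j : I) = j ∧ (1 : ℕ) = 1 then (1 : A.FA) else 0) = 1 := if_pos ⟨rfl, rfl⟩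
      rw [hif, one_mul] at hrlowx
      have hterm4 : C.tmul ((1 : A.FA) ⊗ₜ[KQ] A.gen j 1) (x' ⊗ₜ[KQ] (1 : A.FA))
          = (qq ^ (A.rootForm β' (Finsupp.single j 1))) • (x' ⊗ₜ[KQ] A.gen j 1) := by
        rw [C.tmul_spec (Finsupp.single j (-1)) β' _ _ _ _ hg hx'β,
          rootForm_single_left]
        simp
      have hterm5 : C.tmul ((1 : A.FA) ⊗ₜ[KQ] A.gen j 1) (r' ⊗ₜ[KQ] A.gen j 1) ∈ Elow A j := by
        rw [C.tmul_spec (Finsupp.single j (-1)) (β' + Finsupp.single j 1) _ _ _ _ hg ihh]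
        refine Submodule.smul_mem _ _ (mem_Elow A (wS_mul A (one_mem_wS A) ihh)
          (wS_mul A hg hg) (add_nonpos' (single_nonpos j (by omega))
            (single_nonpos j (by omega))) ?_ ?_)
        · exact ne_of_coord j (by simp)
        · exact ne_of_coord j (by simp)
      have hterm6 : C.tmul ((1 : A.FA) ⊗ₜ[KQ] A.gen j 1) E ∈ Elow A j :=
        tmul_Elow A C (one_mem_wS A) hg (single_nonpos j (by omega)) ihE
      constructor
      · rw [hxprod, hrlowx]
        refine add_mem (mem_wS_congr A (Submodule.smul_mem _ _ hx'β) ?_)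
          (mem_wS_congr A (wS_mul A hg ihh) ?_)
        · rw [hdeg]
          ext a
          by_cases h : j = a <;> simp [Finsupp.single_apply, h]
        · rw [hdeg]
          ext a
          by_cases h : j = a <;> simp [Finsupp.single_apply, h]
      · rw [hxprod, hrho, Finset.sum_range_succ, hterm1, hterm2, hrlowx]
        simp only [Nat.cast_one, CharP.cast_eq_zero, sub_self, mul_zero, neg_zero,
          zpow_zero, one_smul, Finset.sum_range_one, zero_mul, sub_zero, zero_sub,
          Nat.sub_zero, gen_zero, mul_one, zero_smul, add_zero, zero_add, hterm4]
        have heq :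
            (qq ^ (A.rootForm β' (Finsupp.single j 1))) • (x' ⊗ₜ[KQ] A.gen j 1)
              + C.tmul ((1 : A.FA) ⊗ₜ[KQ] A.gen j 1) (r' ⊗ₜ[KQ] A.gen j 1)
              + C.tmul ((1 : A.FA) ⊗ₜ[KQ] A.gen j 1) E
              + ((A.gen j 1 * x') ⊗ₜ[KQ] (1 : A.FA)
                + (A.gen j 1 * r') ⊗ₜ[KQ] A.gen j 1
                + C.tmul (A.gen j 1 ⊗ₜ[KQ] A.gen j (1 - 1)) E)
              - (A.gen j 1 * x') ⊗ₜ[KQ] (1 : A.FA)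
              - ((qq ^ (A.rootForm β' (Finsupp.single j 1))) • x'
                  + A.gen j 1 * r') ⊗ₜ[KQ] A.gen j 1
            = C.tmul ((1 : A.FA) ⊗ₜ[KQ] A.gen j 1) (r' ⊗ₜ[KQ] A.gen j 1)
              + C.tmul ((1 : A.FA) ⊗ₜ[KQ] A.gen j 1) E
              + C.tmul (A.gen j 1 ⊗ₜ[KQ] A.gen j (1 - 1)) E := by
          rw [TensorProduct.add_tmul, ← TensorProduct.smul_tmul']
          abel
        rw [heq]
        exact add_mem (add_mem hterm5 hterm6) hterm3
    · have hji : j ≠ i := fun h => hc ⟨h, valid_real A hp (by rw [h]; exact hi)⟩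
      have hij : ¬ (i = j) := fun h => hji h.symm
      rw [if_neg hc, zero_mul, smul_zero, zero_add] at hrlowx
      constructor
      · rw [hxprod, hrlowx]
        exact mem_wS_congr A (wS_mul A (gen_mem_wS A j k) ihh)
          (by rw [hdeg, add_assoc])
      · rw [hxprod, hrho, Finset.sum_range_succ, hterm1, hterm2, hrlowx]
        simp only [sub_self, mul_zero, neg_zero, zpow_zero, one_smul]
        have heq :
            (∑ m ∈ Finset.range k, (A.qsh j ^ (-((m : ℤ) * ((k : ℤ) - (m : ℤ))))) •
              (C.tmul (A.gen j m ⊗ₜ[KQ] A.gen j (k - m)) (x' ⊗ₜ[KQ] (1 : A.FA))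
               + C.tmul (A.gen j m ⊗ₜ[KQ] A.gen j (k - m)) (r' ⊗ₜ[KQ] A.gen i 1)
               + C.tmul (A.gen j m ⊗ₜ[KQ] A.gen j (k - m)) E)
              + ((A.gen j k * x') ⊗ₜ[KQ] (1 : A.FA)
                + (A.gen j k * r') ⊗ₜ[KQ] A.gen i 1
                + C.tmul (A.gen j k ⊗ₜ[KQ] A.gen j (k - k)) E))
              - (A.gen j k * x') ⊗ₜ[KQ] (1 : A.FA)
              - (A.gen j k * r') ⊗ₜ[KQ] A.gen i 1
            = (∑ m ∈ Finset.range k, (A.qsh j ^ (-((m : ℤ) * ((k : ℤ) - (m : ℤ))))) •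
              (C.tmul (A.gen j m ⊗ₜ[KQ] A.gen j (k - m)) (x' ⊗ₜ[KQ] (1 : A.FA))
               + C.tmul (A.gen j m ⊗ₜ[KQ] A.gen j (k - m)) (r' ⊗ₜ[KQ] A.gen i 1)
               + C.tmul (A.gen j m ⊗ₜ[KQ] A.gen j (k - m)) E))
              + C.tmul (A.gen j k ⊗ₜ[KQ] A.gen j (k - k)) E := by
          abel
        rw [heq]
        refine add_mem (Submodule.sum_mem _ ?_) hterm3
        intro m hm
        have hmk := Finset.mem_range.mp hm
        refine Submodule.smul_mem _ _ (add_mem (add_mem ?_ ?_) ?_)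
        · rw [C.tmul_spec (Finsupp.single j (-((k - m : ℕ) : ℤ))) β' _ _ _ _
            (gen_mem_wS A j (k - m)) hx'β]
          have hv : A.gen j (k - m) * 1
              ∈ A.weightSpace (Finsupp.single j (-((k - m : ℕ) : ℤ))) := by
            have := wS_mul A (gen_mem_wS A j (k - m)) (one_mem_wS A)
            rwa [add_zero] at this
          refine Submodule.smul_mem _ _ (mem_Elow A (wS_mul A (gen_mem_wS A j m) hx'β)
            hv (single_nonpos j (by omega)) ?_ ?_)
          · exact ne_of_coord j (by simp [Finsupp.single_apply]; omega)
          · exact ne_of_coord j (by simp [Finsupp.single_apply, hij]; omega)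
        · rw [C.tmul_spec (Finsupp.single j (-((k - m : ℕ) : ℤ)))
            (β' + Finsupp.single i 1) _ _ _ _ (gen_mem_wS A j (k - m)) ihh]
          refine Submodule.smul_mem _ _ (mem_Elow A (wS_mul A (gen_mem_wS A j m) ihh)
            (wS_mul A (gen_mem_wS A j (k - m)) hg)
            (add_nonpos' (single_nonpos j (by omega)) (single_nonpos i (by omega)))
            ?_ ?_)
          · exact ne_of_coord j
              (by simp [Finsupp.add_apply, Finsupp.single_apply, hij]; omega)
          · exact ne_of_coord j
              (by simp [Finsupp.add_apply, Finsupp.single_apply, hij]; omega)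
        · exact tmul_Elow A C (gen_mem_wS A j m) (gen_mem_wS A j (k - m))
            (single_nonpos j (by omega)) ihE

end RadicalAux

namespace RadicalAux

variable {I : Type*} (A : BCMatrix I)

lemma tmul_smul_right (c : KQ) (x y : A.FA) : x ⊗ₜ[KQ] (c • y) = c • (x ⊗ₜ[KQ] y) :=
  map_smul (TensorProduct.mk KQ A.FA A.FA x) c y

lemma rho_up (C : CoMult A) (R : RhoComponents A C) (i : I) (hi : A.a i i = 2)
    (w : List A.Iinf) :
    R.rup i ((w.map (FreeAlgebra.ι KQ)).prod)
        ∈ A.weightSpace (A.wordDeg w + Finsupp.single i 1) ∧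
    C.rho ((w.map (FreeAlgebra.ι KQ)).prod)
        - (1 : A.FA) ⊗ₜ[KQ] ((w.map (FreeAlgebra.ι KQ)).prod)
        - (A.gen i 1) ⊗ₜ[KQ] (R.rup i ((w.map (FreeAlgebra.ι KQ)).prod))
      ∈ Eup A i := by
  have hg : A.gen i 1 ∈ A.weightSpace (Finsupp.single i (-1)) := by
    simpa using gen_mem_wS A i 1
  induction w with
  | nil =>
    constructor
    · simp only [List.map_nil, List.prod_nil, R.rup_one i hi]
      exact Submodule.zero_mem _
    · simp only [List.map_nil, List.prod_nil, C.rho_one, R.rup_one i hi,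
        TensorProduct.tmul_zero, sub_zero, sub_self]
      exact Submodule.zero_mem _
  | cons p t ih =>
    obtain ⟨ihh, ihE⟩ := ih
    obtain ⟨⟨j, k⟩, hp⟩ := p
    set x' : A.FA := (t.map (FreeAlgebra.ι KQ)).prod with hx'def
    set β' := A.wordDeg t with hβ'def
    have hxprod : ((List.cons (α := A.Iinf) ⟨(j, k), hp⟩ t).map (FreeAlgebra.ι KQ)).prod
        = A.gen j k * x' := by
      rw [gen_of_valid A hp]; rfl
    have hdeg : A.wordDeg (List.cons (α := A.Iinf) ⟨(j, k), hp⟩ t)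
        = Finsupp.single j (-(k : ℤ)) + β' := wordDeg_cons A _ t
    have hx'β : x' ∈ A.weightSpace β' := word_mem A t
    set r' := R.rup i x' with hr'def
    set E := C.rho x' - (1 : A.FA) ⊗ₜ[KQ] x' - (A.gen i 1) ⊗ₜ[KQ] r' with hEdef
    have hrx' : C.rho x' = (1 : A.FA) ⊗ₜ[KQ] x' + (A.gen i 1) ⊗ₜ[KQ] r' + E := by
      rw [hEdef]; abel
    have hrupx : R.rup i (A.gen j k * x') =
        (if j = i ∧ k = 1 then (1 : A.FA) else 0) * x'
          + (qq ^ (A.rootForm (Finsupp.single j (-(k : ℤ))) (Finsupp.single i 1)))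
              • (A.gen j k * r') := by
      rw [R.rup_mul i hi (Finsupp.single j (-(k : ℤ))) _ _ (gen_mem_wS A j k),
        R.rup_gen i j k hi hp]
    have hrho : C.rho (A.gen j k * x') =
        ∑ m ∈ Finset.range (k + 1), (A.qsh j ^ (-((m : ℤ) * ((k : ℤ) - (m : ℤ))))) •
          (C.tmul (A.gen j m ⊗ₜ[KQ] A.gen j (k - m)) ((1 : A.FA) ⊗ₜ[KQ] x')
           + C.tmul (A.gen j m ⊗ₜ[KQ] A.gen j (k - m)) ((A.gen i 1) ⊗ₜ[KQ] r')
           + C.tmul (A.gen j m ⊗ₜ[KQ] A.gen j (k - m)) E) := by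
      rw [C.rho_mul, C.rho_gen j k hp, hrx']
      simp only [map_sum, map_smul, map_add, LinearMap.sum_apply, LinearMap.smul_apply,
        LinearMap.add_apply, smul_add, Finset.sum_add_distrib]
    have hterm1 : C.tmul (A.gen j 0 ⊗ₜ[KQ] A.gen j (k - 0)) ((1 : A.FA) ⊗ₜ[KQ] x')
        = (1 : A.FA) ⊗ₜ[KQ] (A.gen j k * x') := by
      rw [Nat.sub_zero, gen_zero,
        C.tmul_spec (Finsupp.single j (-(k : ℤ))) 0 _ _ _ _ (gen_mem_wS A j k)
          (one_mem_wS A), rootForm_zero_right]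
      simp
    have hterm2 : C.tmul (A.gen j 0 ⊗ₜ[KQ] A.gen j (k - 0)) ((A.gen i 1) ⊗ₜ[KQ] r')
        = (qq ^ (A.rootForm (Finsupp.single j (-(k : ℤ))) (Finsupp.single i 1)))
            • ((A.gen i 1) ⊗ₜ[KQ] (A.gen j k * r')) := by
      rw [Nat.sub_zero, gen_zero,
        C.tmul_spec (Finsupp.single j (-(k : ℤ))) (Finsupp.single i (-1)) _ _ _ _
          (gen_mem_wS A j k) hg, rootForm_single_right]
      simp
    have hterm3 : C.tmul (A.gen j 0 ⊗ₜ[KQ] A.gen j (k - 0)) E ∈ Eup A i :=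
      tmul_Eup A C (gen_mem_wS A j 0) (single_nonpos j (by omega))
        (gen_mem_wS A j (k - 0)) ihE
    by_cases hc : j = i ∧ k = 1
    · obtain ⟨rfl, rfl⟩ := hc
      have hif : (if (j : I) = j ∧ (1 : ℕ) = 1 then (1 : A.FA) else 0) = 1 := if_pos ⟨rfl, rfl⟩
      rw [hif, one_mul] at hrupx
      have hterm4 : C.tmul (A.gen j 1 ⊗ₜ[KQ] A.gen j (1 - 1)) ((1 : A.FA) ⊗ₜ[KQ] x')
          = (A.gen j 1) ⊗ₜ[KQ] x' := by
        rw [Nat.sub_self, gen_zero,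
          C.tmul_spec 0 0 _ _ _ _ (one_mem_wS A) (one_mem_wS A), rootForm_zero_left]
        simp
      have hterm5 : C.tmul (A.gen j 1 ⊗ₜ[KQ] A.gen j (1 - 1)) ((A.gen j 1) ⊗ₜ[KQ] r')
          ∈ Eup A j := by
        rw [Nat.sub_self, gen_zero,
          C.tmul_spec 0 (Finsupp.single j (-1)) _ _ _ _ (one_mem_wS A) hg]
        refine Submodule.smul_mem _ _ (mem_Eup A (wS_mul A hg hg)
          (wS_mul A (mem_wS_congr A (one_mem_wS A) rfl) ihh)
          (add_nonpos' (single_nonpos j (by omega)) (single_nonpos j (by omega))) ?_ ?_)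
        · exact ne_of_coord j (by simp)
        · exact ne_of_coord j (by simp)
      have hterm6 : C.tmul (A.gen j 1 ⊗ₜ[KQ] A.gen j (1 - 1)) E ∈ Eup A j :=
        tmul_Eup A C hg (single_nonpos j (by omega)) (gen_mem_wS A j (1 - 1)) ihE
      constructor
      · rw [hxprod, hrupx]
        refine add_mem (mem_wS_congr A hx'β ?_) (mem_wS_congr A
          (Submodule.smul_mem _ _ (wS_mul A hg ihh)) ?_)
        · rw [hdeg]
          ext a
          by_cases h : j = a <;> simp [Finsupp.single_apply, h]
        · rw [hdeg]
          ext a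
          by_cases h : j = a <;> simp [Finsupp.single_apply, h]
      · rw [hxprod, hrho, Finset.sum_range_succ', hterm1, hterm2, hrupx]
        simp only [zero_add, Nat.cast_one, CharP.cast_eq_zero, sub_self, mul_zero, zero_mul,
          neg_zero, zpow_zero, one_smul, Finset.sum_range_one, sub_zero, hterm4]
        have heq :
            ((A.gen j 1) ⊗ₜ[KQ] x'
              + C.tmul (A.gen j 1 ⊗ₜ[KQ] A.gen j (1 - 1)) ((A.gen j 1) ⊗ₜ[KQ] r')
              + C.tmul (A.gen j 1 ⊗ₜ[KQ] A.gen j (1 - 1)) E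
              + ((1 : A.FA) ⊗ₜ[KQ] (A.gen j 1 * x')
                + (qq ^ (A.rootForm (Finsupp.single j (-(1 : ℤ))) (Finsupp.single j 1)))
                    • ((A.gen j 1) ⊗ₜ[KQ] (A.gen j 1 * r'))
                + C.tmul (A.gen j 0 ⊗ₜ[KQ] A.gen j (1 - 0)) E))
              - (1 : A.FA) ⊗ₜ[KQ] (A.gen j 1 * x')
              - (A.gen j 1) ⊗ₜ[KQ] (x'
                  + (qq ^ (A.rootForm (Finsupp.single j (-(1 : ℤ))) (Finsupp.single j 1)))
                      • (A.gen j 1 * r'))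
            = C.tmul (A.gen j 1 ⊗ₜ[KQ] A.gen j (1 - 1)) ((A.gen j 1) ⊗ₜ[KQ] r')
              + C.tmul (A.gen j 1 ⊗ₜ[KQ] A.gen j (1 - 1)) E
              + C.tmul (A.gen j 0 ⊗ₜ[KQ] A.gen j (1 - 0)) E := by
          rw [TensorProduct.tmul_add, tmul_smul_right A]
          abel
        rw [heq]
        exact add_mem (add_mem hterm5 hterm6) hterm3
    · have hji : j ≠ i := fun h => hc ⟨h, valid_real A hp (by rw [h]; exact hi)⟩
      have hij : ¬ (i = j) := fun h => hji h.symm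
      rw [if_neg hc, zero_mul, zero_add] at hrupx
      constructor
      · rw [hxprod, hrupx]
        exact mem_wS_congr A (Submodule.smul_mem _ _ (wS_mul A (gen_mem_wS A j k) ihh))
          (by rw [hdeg, add_assoc])
      · rw [hxprod, hrho, Finset.sum_range_succ', hterm1, hterm2, hrupx]
        simp only [CharP.cast_eq_zero, zero_mul, neg_zero, zpow_zero, one_smul, sub_zero]
        have heq :
            (∑ m ∈ Finset.range k,
              (A.qsh j ^ (-(((m + 1 : ℕ) : ℤ) * ((k : ℤ) - ((m + 1 : ℕ) : ℤ))))) •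
              (C.tmul (A.gen j (m + 1) ⊗ₜ[KQ] A.gen j (k - (m + 1))) ((1 : A.FA) ⊗ₜ[KQ] x')
               + C.tmul (A.gen j (m + 1) ⊗ₜ[KQ] A.gen j (k - (m + 1))) ((A.gen i 1) ⊗ₜ[KQ] r')
               + C.tmul (A.gen j (m + 1) ⊗ₜ[KQ] A.gen j (k - (m + 1))) E)
              + ((1 : A.FA) ⊗ₜ[KQ] (A.gen j k * x')
                + (qq ^ (A.rootForm (Finsupp.single j (-(k : ℤ))) (Finsupp.single i 1)))
                    • ((A.gen i 1) ⊗ₜ[KQ] (A.gen j k * r'))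
                + C.tmul (A.gen j 0 ⊗ₜ[KQ] A.gen j (k - 0)) E))
              - (1 : A.FA) ⊗ₜ[KQ] (A.gen j k * x')
              - (A.gen i 1) ⊗ₜ[KQ]
                  ((qq ^ (A.rootForm (Finsupp.single j (-(k : ℤ))) (Finsupp.single i 1)))
                    • (A.gen j k * r'))
            = (∑ m ∈ Finset.range k,
              (A.qsh j ^ (-(((m + 1 : ℕ) : ℤ) * ((k : ℤ) - ((m + 1 : ℕ) : ℤ))))) •
              (C.tmul (A.gen j (m + 1) ⊗ₜ[KQ] A.gen j (k - (m + 1))) ((1 : A.FA) ⊗ₜ[KQ] x')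
               + C.tmul (A.gen j (m + 1) ⊗ₜ[KQ] A.gen j (k - (m + 1))) ((A.gen i 1) ⊗ₜ[KQ] r')
               + C.tmul (A.gen j (m + 1) ⊗ₜ[KQ] A.gen j (k - (m + 1))) E))
              + C.tmul (A.gen j 0 ⊗ₜ[KQ] A.gen j (k - 0)) E := by
          rw [tmul_smul_right A]
          abel
        rw [heq]
        refine add_mem (Submodule.sum_mem _ ?_) hterm3
        intro m hm
        have hmk := Finset.mem_range.mp hm
        refine Submodule.smul_mem _ _ (add_mem (add_mem ?_ ?_) ?_)
        · rw [C.tmul_spec (Finsupp.single j (-((k - (m + 1) : ℕ) : ℤ))) 0 _ _ _ _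
            (gen_mem_wS A j (k - (m + 1))) (one_mem_wS A)]
          have hu : A.gen j (m + 1) * 1
              ∈ A.weightSpace (Finsupp.single j (-(((m + 1 : ℕ)) : ℤ))) := by
            have := wS_mul A (gen_mem_wS A j (m + 1)) (one_mem_wS A)
            rwa [add_zero] at this
          refine Submodule.smul_mem _ _ (mem_Eup A hu
            (wS_mul A (gen_mem_wS A j (k - (m + 1))) hx'β)
            (single_nonpos j (by omega)) ?_ ?_)
          · exact ne_of_coord j (by simp [Finsupp.single_apply]; omega)
          · exact ne_of_coord j (by simp [Finsupp.single_apply, hij]; omega)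
        · rw [C.tmul_spec (Finsupp.single j (-((k - (m + 1) : ℕ) : ℤ)))
            (Finsupp.single i (-1)) _ _ _ _ (gen_mem_wS A j (k - (m + 1))) hg]
          refine Submodule.smul_mem _ _ (mem_Eup A
            (wS_mul A (gen_mem_wS A j (m + 1)) hg)
            (wS_mul A (gen_mem_wS A j (k - (m + 1))) ihh)
            (add_nonpos' (single_nonpos j (by omega)) (single_nonpos i (by omega)))
            ?_ ?_)
          · exact ne_of_coord j
              (by simp [Finsupp.add_apply, Finsupp.single_apply, hij]; omega)
          · exact ne_of_coord j
              (by simp [Finsupp.add_apply, Finsupp.single_apply, hij]; omega)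
        · exact tmul_Eup A C (gen_mem_wS A j (m + 1)) (single_nonpos j (by omega))
            (gen_mem_wS A j (k - (m + 1))) ihE

end RadicalAux

namespace RadicalAux

variable {I : Type*} (A : BCMatrix I) (C : CoMult A) {ν : I → ℕ → KQ}

lemma BB_Elow (L : LusztigForm A C ν) {i : I} {e : A.FA ⊗[KQ] A.FA}
    (he : e ∈ Elow A i) (y : A.FA) :
    LinearMap.BilinForm.tmul L.B L.B e (y ⊗ₜ[KQ] A.gen i 1) = 0 := by
  have hg : A.gen i 1 ∈ A.weightSpace (Finsupp.single i (-1)) := by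
    simpa using gen_mem_wS A i 1
  induction he using Submodule.span_induction with
  | mem t ht =>
    obtain ⟨γ, δ, u, v, hu, hv, h1, h2, h3, rfl⟩ := ht
    rw [LinearMap.BilinForm.tensorDistrib_tmul,
      L.wt γ (Finsupp.single i (-1)) h3 v hv _ hg, zero_smul]
  | zero => simp
  | add a b _ _ ha hb => rw [map_add, LinearMap.add_apply, ha, hb, add_zero]
  | smul c a _ ha => rw [map_smul, LinearMap.smul_apply, ha, smul_zero]

lemma BB_Eup (L : LusztigForm A C ν) {i : I} {e : A.FA ⊗[KQ] A.FA}
    (he : e ∈ Eup A i) (y : A.FA) :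
    LinearMap.BilinForm.tmul L.B L.B e ((A.gen i 1) ⊗ₜ[KQ] y) = 0 := by
  have hg : A.gen i 1 ∈ A.weightSpace (Finsupp.single i (-1)) := by
    simpa using gen_mem_wS A i 1
  induction he using Submodule.span_induction with
  | mem t ht =>
    obtain ⟨γ, δ, u, v, hu, hv, h1, h2, h3, rfl⟩ := ht
    rw [LinearMap.BilinForm.tensorDistrib_tmul,
      L.wt γ (Finsupp.single i (-1)) h3 u hu _ hg, smul_zero]
  | zero => simp
  | add a b _ _ ha hb => rw [map_add, LinearMap.add_apply, ha, hb, add_zero]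
  | smul c a _ ha => rw [map_smul, LinearMap.smul_apply, ha, smul_zero]

lemma BB_errLow (L : LusztigForm A C ν) {i : I} {l : ℕ} {e : A.FA ⊗[KQ] A.FA}
    (he : e ∈ A.errLow i l) (y : A.FA) :
    LinearMap.BilinForm.tmul L.B L.B e (y ⊗ₜ[KQ] A.gen i l) = 0 := by
  induction he using Submodule.span_induction with
  | mem t ht =>
    obtain ⟨γ, hγ, u, v, hv, rfl⟩ := ht
    rw [LinearMap.BilinForm.tensorDistrib_tmul,
      L.wt γ (Finsupp.single i (-(l : ℤ))) hγ v hv _ (gen_mem_wS A i l), zero_smul]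
  | zero => simp
  | add a b _ _ ha hb => rw [map_add, LinearMap.add_apply, ha, hb, add_zero]
  | smul c a _ ha => rw [map_smul, LinearMap.smul_apply, ha, smul_zero]

lemma BB_errUp (L : LusztigForm A C ν) {i : I} {l : ℕ} {e : A.FA ⊗[KQ] A.FA}
    (he : e ∈ A.errUp i l) (y : A.FA) :
    LinearMap.BilinForm.tmul L.B L.B e ((A.gen i l) ⊗ₜ[KQ] y) = 0 := by
  induction he using Submodule.span_induction with
  | mem t ht =>
    obtain ⟨γ, hγ, u, hu, v, rfl⟩ := ht
    rw [LinearMap.BilinForm.tensorDistrib_tmul,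
      L.wt γ (Finsupp.single i (-(l : ℤ))) hγ u hu _ (gen_mem_wS A i l), smul_zero]
  | zero => simp
  | add a b _ _ ha hb => rw [map_add, LinearMap.add_apply, ha, hb, add_zero]
  | smul c a _ ha => rw [map_smul, LinearMap.smul_apply, ha, smul_zero]

end RadicalAux

namespace RadicalAux

variable {I : Type*} (A : BCMatrix I) (C : CoMult A) {ν : I → ℕ → KQ}

lemma hB1g (L : LusztigForm A C ν) (i : I) : L.B 1 (A.gen i 1) = 0 :=
  L.wt 0 (Finsupp.single i (-1))
    (fun h => absurd (DFunLike.congr_fun h i) (by simp)) 1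
    (one_mem_wS A) _ (by simpa using gen_mem_wS A i 1)

lemma key_low (L : LusztigForm A C ν) (R : RhoComponents A C) (i : I)
    (hi : A.a i i = 2) (x y : A.FA) :
    L.B x (y * A.gen i 1) = L.B (A.gen i 1) (A.gen i 1) * L.B (R.rlow i x) y := by
  have hx := span_words A x
  induction hx using Submodule.span_induction with
  | mem a ha =>
    obtain ⟨w, rfl⟩ := ha
    obtain ⟨-, hE⟩ := rho_low A C R i hi w
    rw [L.mul_compat]
    have hdec : C.rho ((w.map (FreeAlgebra.ι KQ)).prod)
        = (C.rho ((w.map (FreeAlgebra.ι KQ)).prod)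
            - ((w.map (FreeAlgebra.ι KQ)).prod) ⊗ₜ[KQ] (1 : A.FA)
            - (R.rlow i ((w.map (FreeAlgebra.ι KQ)).prod)) ⊗ₜ[KQ] (A.gen i 1))
          + ((w.map (FreeAlgebra.ι KQ)).prod) ⊗ₜ[KQ] (1 : A.FA)
          + (R.rlow i ((w.map (FreeAlgebra.ι KQ)).prod)) ⊗ₜ[KQ] (A.gen i 1) := by
      abel
    rw [hdec, map_add, map_add, LinearMap.add_apply, LinearMap.add_apply,
      BB_Elow A C L hE y, zero_add,
      LinearMap.BilinForm.tensorDistrib_tmul, LinearMap.BilinForm.tensorDistrib_tmul,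
      hB1g A C L i, zero_smul, zero_add, smul_eq_mul]
  | zero => simp
  | add a b _ _ ha hb =>
    simp only [map_add, LinearMap.add_apply, ha, hb, mul_add]
  | smul c a _ ha =>
    simp only [map_smul, LinearMap.smul_apply, ha, smul_eq_mul]
    ring

lemma key_up (L : LusztigForm A C ν) (R : RhoComponents A C) (i : I)
    (hi : A.a i i = 2) (x y : A.FA) :
    L.B x (A.gen i 1 * y) = L.B (A.gen i 1) (A.gen i 1) * L.B (R.rup i x) y := by
  have hx := span_words A x
  induction hx using Submodule.span_induction with
  | mem a ha =>
    obtain ⟨w, rfl⟩ := ha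
    obtain ⟨-, hE⟩ := rho_up A C R i hi w
    rw [L.mul_compat]
    have hdec : C.rho ((w.map (FreeAlgebra.ι KQ)).prod)
        = (C.rho ((w.map (FreeAlgebra.ι KQ)).prod)
            - (1 : A.FA) ⊗ₜ[KQ] ((w.map (FreeAlgebra.ι KQ)).prod)
            - (A.gen i 1) ⊗ₜ[KQ] (R.rup i ((w.map (FreeAlgebra.ι KQ)).prod)))
          + (1 : A.FA) ⊗ₜ[KQ] ((w.map (FreeAlgebra.ι KQ)).prod)
          + (A.gen i 1) ⊗ₜ[KQ] (R.rup i ((w.map (FreeAlgebra.ι KQ)).prod)) := by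
      abel
    rw [hdec, map_add, map_add, LinearMap.add_apply, LinearMap.add_apply,
      BB_Eup A C L hE y, zero_add,
      LinearMap.BilinForm.tensorDistrib_tmul, LinearMap.BilinForm.tensorDistrib_tmul,
      hB1g A C L i, smul_zero, zero_add, smul_eq_mul]
    ring
  | zero => simp
  | add a b _ _ ha hb =>
    simp only [map_add, LinearMap.add_apply, ha, hb, mul_add]
  | smul c a _ ha =>
    simp only [map_smul, LinearMap.smul_apply, ha, smul_eq_mul]
    ring

lemma keyB_low (L : LusztigForm A C ν) (R : RhoComponents A C) (i : I) (l : ℕ)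
    (hii : A.a i i ≤ 0) (hl : 1 ≤ l) (x y : A.FA) :
    L.B x (y * A.gen i l) =
      ∑ c : Composition l, L.B (A.gen i l) (A.fcomp i c) * L.B y (R.low i l x c) := by
  rw [L.mul_compat]
  have hsp := R.low_spec i l hii hl x
  have hdec : C.rho x
      = (C.rho x - ∑ c : Composition l, (R.low i l x c) ⊗ₜ[KQ] (A.fcomp i c))
        + ∑ c : Composition l, (R.low i l x c) ⊗ₜ[KQ] (A.fcomp i c) := by abel
  rw [hdec, map_add, LinearMap.add_apply, BB_errLow A C L hsp y, zero_add,
    map_sum, LinearMap.sum_apply]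
  refine Finset.sum_congr rfl fun c _ => ?_
  rw [LinearMap.BilinForm.tensorDistrib_tmul, smul_eq_mul,
    L.symm (A.fcomp i c) (A.gen i l), L.symm (R.low i l x c) y]

lemma keyB_up (L : LusztigForm A C ν) (R : RhoComponents A C) (i : I) (l : ℕ)
    (hii : A.a i i ≤ 0) (hl : 1 ≤ l) (x y : A.FA) :
    L.B x (A.gen i l * y) =
      ∑ c : Composition l, L.B (A.gen i l) (A.fcomp i c) * L.B y (R.up i l x c) := by
  rw [L.mul_compat]
  have hsp := R.up_spec i l hii hl x
  have hdec : C.rho x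
      = (C.rho x - ∑ c : Composition l, (A.fcomp i c) ⊗ₜ[KQ] (R.up i l x c))
        + ∑ c : Composition l, (A.fcomp i c) ⊗ₜ[KQ] (R.up i l x c) := by abel
  rw [hdec, map_add, LinearMap.add_apply, BB_errUp A C L hsp y, zero_add,
    map_sum, LinearMap.sum_apply]
  refine Finset.sum_congr rfl fun c _ => ?_
  rw [LinearMap.BilinForm.tensorDistrib_tmul, smul_eq_mul,
    L.symm (A.fcomp i c) (A.gen i l), L.symm (R.up i l x c) y, mul_comm]

lemma rad_low (L : LusztigForm A C ν) (R : RhoComponents A C) {β : I →₀ ℤ}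
    (hβ : β ≠ 0) {x : A.FA} (hx : x ∈ A.weightSpace β)
    (hre : ∀ i, A.a i i = 2 → R.rlow i x ∈ L.radical)
    (him : ∀ i l, A.a i i ≤ 0 → 1 ≤ l → ∀ c : Composition l, R.low i l x c ∈ L.radical) :
    x ∈ L.radical := by
  rw [LusztigForm.radical, LinearMap.mem_ker]
  apply LinearMap.ext
  intro z
  rw [LinearMap.zero_apply]
  have hz := span_words A z
  induction hz using Submodule.span_induction with
  | mem a ha =>
    obtain ⟨w, rfl⟩ := ha
    rcases w.eq_nil_or_concat' with rfl | ⟨t, p, rfl⟩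
    · simpa using L.wt β 0 hβ x hx 1 (one_mem_wS A)
    · obtain ⟨⟨j, k⟩, hp⟩ := p
      rw [List.map_append, List.prod_append]
      change L.B x ((List.map (FreeAlgebra.ι KQ) t).prod
        * (FreeAlgebra.ι KQ (X := A.Iinf) ⟨(j, k), hp⟩ * 1)) = 0
      rw [mul_one, ← gen_of_valid A hp]
      rcases hp with ⟨h2, h1⟩ | ⟨hle, h1⟩
      · subst h1
        rw [key_low A C L R j h2 x _,
          LinearMap.mem_ker.mp (hre j h2), LinearMap.zero_apply, mul_zero]
      · rw [keyB_low A C L R j k hle h1 x _]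
        refine Finset.sum_eq_zero fun c _ => ?_
        rw [L.symm _ (R.low j k x c),
          LinearMap.mem_ker.mp (him j k hle h1 c), LinearMap.zero_apply, mul_zero]
  | zero => simp
  | add a b _ _ ha hb => rw [map_add, ha, hb, add_zero]
  | smul c a _ ha =>
    set_option synthInstance.maxHeartbeats 1000000 in
    rw [map_smul, ha, smul_zero]

lemma rad_up (L : LusztigForm A C ν) (R : RhoComponents A C) {β : I →₀ ℤ}
    (hβ : β ≠ 0) {x : A.FA} (hx : x ∈ A.weightSpace β)
    (hre : ∀ i, A.a i i = 2 → R.rup i x ∈ L.radical)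
    (him : ∀ i l, A.a i i ≤ 0 → 1 ≤ l → ∀ c : Composition l, R.up i l x c ∈ L.radical) :
    x ∈ L.radical := by
  rw [LusztigForm.radical, LinearMap.mem_ker]
  apply LinearMap.ext
  intro z
  rw [LinearMap.zero_apply]
  have hz := span_words A z
  induction hz using Submodule.span_induction with
  | mem a ha =>
    obtain ⟨w, rfl⟩ := ha
    rcases w with _ | ⟨p, t⟩
    · simpa using L.wt β 0 hβ x hx 1 (one_mem_wS A)
    · obtain ⟨⟨j, k⟩, hp⟩ := p
      change L.B x (FreeAlgebra.ι KQ (X := A.Iinf) ⟨(j, k), hp⟩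
        * (List.map (FreeAlgebra.ι KQ) t).prod) = 0
      rw [← gen_of_valid A hp]
      rcases hp with ⟨h2, h1⟩ | ⟨hle, h1⟩
      · subst h1
        rw [key_up A C L R j h2 x _,
          LinearMap.mem_ker.mp (hre j h2), LinearMap.zero_apply, mul_zero]
      · rw [keyB_up A C L R j k hle h1 x _]
        refine Finset.sum_eq_zero fun c _ => ?_
        rw [L.symm _ (R.up j k x c),
          LinearMap.mem_ker.mp (him j k hle h1 c), LinearMap.zero_apply, mul_zero]
  | zero => simp
  | add a b _ _ ha hb => rw [map_add, ha, hb, add_zero]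
  | smul c a _ ha =>
    set_option synthInstance.maxHeartbeats 1000000 in
    rw [map_smul, ha, smul_zero]

end RadicalAux
/-- Lemma on the radical: the adjunction formulas for `( , )_L`
and the radical criterion. -/
theorem radical_criterion {I : Type*} [Countable I] (A : BCMatrix I) (C : CoMult A)
    (ν : I → ℕ → KQ) (hν : ∀ i l, A.validIdx i l → ν i l ≠ 0)
    (L : LusztigForm A C ν) (R : RhoComponents A C) :
    -- (a)
    (∀ i, A.a i i = 2 → ∀ x y : A.FA,
      L.B (y * A.gen i 1) x = L.B (A.gen i 1) (A.gen i 1) * L.B y (R.rlow i x) ∧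
      L.B (A.gen i 1 * y) x = L.B (A.gen i 1) (A.gen i 1) * L.B y (R.rup i x)) ∧
    -- (b)
    (∀ i l, A.a i i ≤ 0 → 1 ≤ l → ∀ x y : A.FA,
      L.B (y * A.gen i l) x =
        ∑ c : Composition l, L.B (A.gen i l) (A.fcomp i c) * L.B y (R.low i l x c) ∧
      L.B (A.gen i l * y) x =
        ∑ c : Composition l, L.B (A.gen i l) (A.fcomp i c) * L.B y (R.up i l x c)) ∧
    -- (c)
    (∀ (β : I →₀ ℤ), β ≠ 0 → ∀ x ∈ A.weightSpace β,
      (((∀ i, A.a i i = 2 → R.rlow i x ∈ L.radical) ∧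
        (∀ i l, A.a i i ≤ 0 → 1 ≤ l → ∀ c : Composition l, R.low i l x c ∈ L.radical)) →
          x ∈ L.radical) ∧
      (((∀ i, A.a i i = 2 → R.rup i x ∈ L.radical) ∧
        (∀ i l, A.a i i ≤ 0 → 1 ≤ l → ∀ c : Composition l, R.up i l x c ∈ L.radical)) →
          x ∈ L.radical)) := by
  refine ⟨?_, ?_, ?_⟩
  · intro i hi x y
    constructor
    · rw [L.symm (y * A.gen i 1) x, RadicalAux.key_low A C L R i hi x y,
        L.symm (R.rlow i x) y]
    · rw [L.symm (A.gen i 1 * y) x, RadicalAux.key_up A C L R i hi x y,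
        L.symm (R.rup i x) y]
  · intro i l hii hl x y
    constructor
    · rw [L.symm (y * A.gen i l) x, RadicalAux.keyB_low A C L R i l hii hl x y]
    · rw [L.symm (A.gen i l * y) x, RadicalAux.keyB_up A C L R i l hii hl x y]
  · intro β hβ x hx
    exact ⟨fun h => RadicalAux.rad_low A C L R hβ hx h.1 h.2,
      fun h => RadicalAux.rad_up A C L R hβ hx h.1 h.2⟩
end
end

section
/- Let (i,k),(j,l)∈I^∞ with a_{ij}=0. Then the commutator X = f_{ik}f_{jl} − f_{jl}f_{ik} belongs to the radical ℛ of ( , )_L. -/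
/- Setting: quantum Borcherds-Bozec algebras (Fan–Kang–Kim–Tolmachov, arXiv:2108.04732).
   Common framework for the free algebra ℱ over ℚ(q) with its Q₋-grading and
   twisted comultiplication ϱ. -/

open scoped TensorProduct

noncomputable section

section Auxiliary

namespace BCMatrix

variable {I : Type*} (A : BCMatrix I)

lemma not_validIdx_zero (i : I) : ¬ A.validIdx i 0 := by
  rintro (⟨_, h⟩ | ⟨_, h⟩) <;> omega

lemma gen_zero (i : I) : A.gen i 0 = 1 := by
  rw [gen, dif_neg (A.not_validIdx_zero i), if_pos rfl]

lemma gen_of_valid {i : I} {l : ℕ} (h : A.validIdx i l) :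
    A.gen i l = FreeAlgebra.ι KQ (⟨(i, l), h⟩ : A.Iinf) := by
  rw [gen, dif_pos h]
  rfl

lemma gen_of_invalid {i : I} {l : ℕ} (h : ¬ A.validIdx i l) (hl : l ≠ 0) :
    A.gen i l = 0 := by
  rw [gen, dif_neg h, if_neg hl]

lemma one_mem_weightSpace : (1 : A.FA) ∈ A.weightSpace 0 :=
  Submodule.subset_span ⟨[], by simp [wordDeg], by simp⟩

lemma gen_mem_weightSpace (i : I) (l : ℕ) :
    A.gen i l ∈ A.weightSpace (Finsupp.single i (-(l : ℤ))) := by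
  by_cases h : A.validIdx i l
  · exact Submodule.subset_span ⟨[⟨(i, l), h⟩], by simp [wordDeg, List.map],
      by simp [A.gen_of_valid h, List.map]; rfl⟩
  · by_cases hl : l = 0
    · subst hl
      simpa [A.gen_zero] using A.one_mem_weightSpace
    · rw [A.gen_of_invalid h hl]; exact Submodule.zero_mem _

lemma gen_mul_gen_mem (i j : I) {m n : ℕ} (hm : A.validIdx i m) (hn : A.validIdx j n) :
    A.gen i m * A.gen j n ∈
      A.weightSpace (Finsupp.single i (-(m : ℤ)) + Finsupp.single j (-(n : ℤ))) :=
  Submodule.subset_span ⟨[⟨(i, m), hm⟩, ⟨(j, n), hn⟩], by simp [wordDeg, List.map],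
    by simp [A.gen_of_valid hm, A.gen_of_valid hn, List.map]; rfl⟩

lemma rootForm_single (i j : I) (a b : ℤ) :
    A.rootForm (Finsupp.single i a) (Finsupp.single j b) = a * b * (A.r i * A.a i j) := by
  classical
  rw [rootForm, Finsupp.sum_single_index (by simp), Finsupp.sum_single_index (by simp)]

end BCMatrix

variable {I : Type*} {A : BCMatrix I} {C : CoMult A} {ν : I → ℕ → KQ}

lemma B_gen_gen_ne (L : LusztigForm A C ν) {i : I} {s t : ℕ} (h : s ≠ t) :
    L.B (A.gen i s) (A.gen i t) = 0 := by
  refine L.wt _ _ ?_ _ (A.gen_mem_weightSpace i s) _ (A.gen_mem_weightSpace i t)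
  intro he
  have := DFunLike.congr_fun he i
  simp only [Finsupp.single_eq_same] at this
  omega

lemma B_genmul_mul (L : LusztigForm A C ν) {i j : I} {m n : ℕ}
    (hm : A.validIdx i m) (hn : A.validIdx j n) (hij : A.a i j = 0) (y z : A.FA) :
    L.B (A.gen i m * A.gen j n) (y * z) =
      ∑ s ∈ Finset.range (m + 1), ∑ t ∈ Finset.range (n + 1),
        (A.qsh i ^ (-((s : ℤ) * ((m : ℤ) - (s : ℤ)))) *
          A.qsh j ^ (-((t : ℤ) * ((n : ℤ) - (t : ℤ))))) *
          (L.B (A.gen i s * A.gen j t) y * L.B (A.gen i (m - s) * A.gen j (n - t)) z) := by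
  have hspec : ∀ s t : ℕ,
      C.tmul (A.gen i s ⊗ₜ[KQ] A.gen i (m - s)) (A.gen j t ⊗ₜ[KQ] A.gen j (n - t)) =
        (A.gen i s * A.gen j t) ⊗ₜ[KQ] (A.gen i (m - s) * A.gen j (n - t)) := by
    intro s t
    rw [C.tmul_spec (Finsupp.single i (-((m - s : ℕ) : ℤ))) (Finsupp.single j (-(t : ℤ)))
      _ _ _ _ (A.gen_mem_weightSpace i (m - s)) (A.gen_mem_weightSpace j t),
      A.rootForm_single, hij]
    simp
  rw [L.mul_compat, C.rho_mul, C.rho_gen i m hm, C.rho_gen j n hn]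
  simp only [map_sum, map_smul, LinearMap.sum_apply, LinearMap.smul_apply, hspec,
    LinearMap.BilinForm.tensorDistrib_tmul, smul_eq_mul, Finset.mul_sum, Finset.sum_mul]
  rw [Finset.sum_comm]
  refine Finset.sum_congr rfl fun s _ => Finset.sum_congr rfl fun t _ => by ring

set_option maxHeartbeats 1000000 in
set_option synthInstance.maxHeartbeats 1000000 in
lemma key_comm (L : LusztigForm A C ν) (i j : I) (hij : A.a i j = 0) (hji : A.a j i = 0) :
    ∀ N m n : ℕ, m + n ≤ N → ∀ y : A.FA,
      L.B (A.gen i m * A.gen j n) y = L.B (A.gen j n * A.gen i m) y := by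
  intro N
  induction N with
  | zero =>
    intro m n hmn y
    obtain ⟨rfl, rfl⟩ : m = 0 ∧ n = 0 := by omega
    rw [A.gen_zero, one_mul, mul_one]
  | succ N ih =>
    intro m n hmn y
    rcases Nat.eq_zero_or_pos m with rfl | hm0
    · rw [A.gen_zero, one_mul, mul_one]
    rcases Nat.eq_zero_or_pos n with rfl | hn0
    · rw [A.gen_zero, one_mul, mul_one]
    by_cases hvm : A.validIdx i m
    case neg => rw [A.gen_of_invalid hvm (by omega), zero_mul, mul_zero]
    by_cases hvn : A.validIdx j n
    case neg => rw [A.gen_of_invalid hvn (by omega), zero_mul, mul_zero]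
    -- the commutator lies in the weight space of `β = -m α_i - n α_j`
    set X : A.FA := A.gen i m * A.gen j n - A.gen j n * A.gen i m with hX
    have hxmem : X ∈ A.weightSpace (Finsupp.single i (-(m : ℤ)) + Finsupp.single j (-(n : ℤ))) := by
      refine Submodule.sub_mem _ (A.gen_mul_gen_mem i j hvm hvn) ?_
      have := A.gen_mul_gen_mem j i hvn hvm
      rwa [add_comm] at this
    have hBone : L.B X 1 = 0 := by
      refine L.wt _ 0 ?_ _ hxmem _ A.one_mem_weightSpace
      intro h
      have h1 := DFunLike.congr_fun h i
      rw [Finsupp.add_apply, Finsupp.single_eq_same, Finsupp.coe_zero, Pi.zero_apply] at h1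
      by_cases hc : j = i
      · rw [hc, Finsupp.single_eq_same] at h1; omega
      · rw [Finsupp.single_eq_of_ne' hc] at h1; omega
    suffices h : ∀ y, L.B X y = 0 by
      have := h y
      rwa [hX, map_sub, LinearMap.sub_apply, sub_eq_zero] at this
    clear y
    intro y
    induction y using FreeAlgebra.induction with
    | grade0 r =>
      rw [Algebra.algebraMap_eq_smul_one, map_smul, hBone, smul_zero]
    | grade1 p =>
      obtain ⟨⟨i', l'⟩, hp⟩ := p
      change L.B X (FreeAlgebra.ι KQ (⟨(i', l'), hp⟩ : A.Iinf)) = 0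
      by_cases hβ : (Finsupp.single i' (-(l' : ℤ)) : I →₀ ℤ) =
          Finsupp.single i (-(m : ℤ)) + Finsupp.single j (-(n : ℤ))
      · -- the diagonal case : forces i = j and l' = m + n
        rcases eq_or_ne i j with rfl | hne
        · have hβ' : (Finsupp.single i' (-(l' : ℤ)) : I →₀ ℤ) =
              Finsupp.single i (-((m : ℤ) + (n : ℤ))) := by
            rw [hβ, ← Finsupp.single_add, ← neg_add]
          rcases (Finsupp.single_eq_single_iff _ _ _ _).mp hβ' with ⟨h1, h2⟩ | ⟨h1, h2⟩
          · have hl' : l' = m + n := by omega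
            have hp' : A.validIdx i (m + n) := by rw [← h1, ← hl']; exact hp
            have hgen : FreeAlgebra.ι KQ (⟨(i', l'), hp⟩ : A.Iinf) = A.gen i (m + n) := by
              rw [A.gen_of_valid hp']
              have heq : (⟨(i', l'), hp⟩ : A.Iinf) = ⟨(i, m + n), hp'⟩ := by
                apply Subtype.ext
                show ((i', l') : I × ℕ) = (i, m + n)
                rw [h1, hl']
              rw [heq]
            have hqsh : A.qsh i = 1 := by
              rw [BCMatrix.qsh, hij, mul_zero, show ((0 : ℤ) / 2) = 0 by decide, zpow_zero]
            refine (congrArg (L.B X) hgen).trans ?_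
            rw [hX, map_sub, LinearMap.sub_apply, sub_eq_zero,
              L.symm, L.symm (A.gen i n * A.gen i m),
              L.mul_compat, L.mul_compat, C.rho_gen i (m + n) hp']
            simp only [map_sum, map_smul, LinearMap.sum_apply, LinearMap.smul_apply,
              LinearMap.BilinForm.tensorDistrib_tmul, smul_eq_mul, hqsh, one_zpow, one_mul]
            rw [Finset.sum_eq_single_of_mem m (by simp only [Finset.mem_range]; omega)
                (fun b _ hb => by rw [B_gen_gen_ne L hb, mul_zero]),
              Finset.sum_eq_single_of_mem n (by simp only [Finset.mem_range]; omega)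
                (fun b _ hb => by rw [B_gen_gen_ne L hb, mul_zero]),
              Nat.add_sub_cancel_left, Nat.add_sub_cancel]
            ring
          · omega
        · exfalso
          have h1 := DFunLike.congr_fun hβ i
          have h2 := DFunLike.congr_fun hβ j
          rw [Finsupp.add_apply, Finsupp.single_eq_same,
            Finsupp.single_eq_of_ne' (Ne.symm hne), add_zero] at h1
          rw [Finsupp.add_apply, Finsupp.single_eq_same,
            Finsupp.single_eq_of_ne' hne, zero_add] at h2
          by_cases hc : i' = i
          · rw [hc, Finsupp.single_eq_of_ne' hne] at h2
            omega
          · rw [Finsupp.single_eq_of_ne' hc] at h1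
            omega
      · refine L.wt _ _ (fun h => hβ h.symm) _ hxmem _ ?_
        exact Submodule.subset_span ⟨[⟨(i', l'), hp⟩], by simp [BCMatrix.wordDeg, List.map], by simp [List.map]⟩
    | mul a b ha hb =>
      rw [hX, map_sub, LinearMap.sub_apply, sub_eq_zero] at ha hb ⊢
      rw [B_genmul_mul L hvm hvn hij, B_genmul_mul L hvn hvm hji]
      conv_rhs => rw [Finset.sum_comm]
      refine Finset.sum_congr rfl fun s hs => Finset.sum_congr rfl fun t ht => ?_
      simp only [Finset.mem_range] at hs ht
      have h1 : L.B (A.gen i s * A.gen j t) a = L.B (A.gen j t * A.gen i s) a := by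
        rcases Nat.lt_or_ge (s + t) (m + n) with h | h
        · exact ih s t (by omega) a
        · obtain ⟨rfl, rfl⟩ : s = m ∧ t = n := by omega
          exact ha
      have h2 : L.B (A.gen i (m - s) * A.gen j (n - t)) b =
          L.B (A.gen j (n - t) * A.gen i (m - s)) b := by
        rcases Nat.lt_or_ge ((m - s) + (n - t)) (m + n) with h | h
        · exact ih (m - s) (n - t) (by omega) b
        · obtain ⟨rfl, rfl⟩ : s = 0 ∧ t = 0 := by omega
          simpa only [Nat.sub_zero] using hb
      rw [h1, h2]; ring
    | add a b ha hb =>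
      rw [map_add, ha, hb, add_zero]

end Auxiliary

/-- for `(i,k),(j,l) ∈ I^∞` with `a_{ij}=0`, the commutator
`X = f_{ik} f_{jl} - f_{jl} f_{ik}` lies in the radical `ℛ` of `( , )_L`. -/
theorem commutator_in_radical {I : Type*} [Countable I] (A : BCMatrix I) (C : CoMult A)
    (ν : I → ℕ → KQ) (hν : ∀ i l, A.validIdx i l → ν i l ≠ 0)
    (L : LusztigForm A C ν)
    (i j : I) (k l : ℕ) (hik : A.validIdx i k) (hjl : A.validIdx j l)
    (hij : A.a i j = 0) :
    A.gen i k * A.gen j l - A.gen j l * A.gen i k ∈ L.radical := by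
  have hji : A.a j i = 0 := by
    have h := A.symmetrizable i j
    have hr := A.r_pos j
    rw [hij, mul_zero] at h
    rcases mul_eq_zero.mp h.symm with h' | h'
    · omega
    · exact h'
  rw [LusztigForm.radical, LinearMap.mem_ker]
  ext y
  rw [map_sub, LinearMap.sub_apply, LinearMap.zero_apply, sub_eq_zero]
  exact key_comm L i j hij hji (k + l) k l le_rfl y
end
end

section
/- Let * be the ℚ(q)-linear anti-involution of U_q(𝔤) determined by e_{il}*=e_{il}, f_{il}*=f_{il}, (q^h)*=q^{−h}. Then for all P,Q∈U^− one has (P*,Q*)_L=(P,Q)_L. -/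
/- Setting: quantum Borcherds–Bozec algebras (Fan–Kang–Kim, arXiv:2108.04732).
   We axiomatize the quantum Borcherds–Bozec algebra `U_q(𝔤)` attached to a
   Borcherds–Cartan datum as a structure whose fields record its defining data. -/

open scoped TensorProduct

noncomputable section

/-- `q_i = q^{r_i}` in `F(q)`. -/
def qiF (F : Type*) [Field F] (ri : ℤ) : RatFunc F := (RatFunc.X : RatFunc F) ^ ri

/-- The quantum factorial `[n]_i!` in `F(q)`. -/
def qfactF (F : Type*) [Field F] (ri : ℤ) (n : ℕ) : RatFunc F :=
  ∏ k ∈ Finset.range n,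
    ((qiF F ri ^ ((k : ℤ) + 1) - qiF F ri ^ (-((k : ℤ) + 1))) / (qiF F ri - (qiF F ri)⁻¹))

/-- Divided power `x^{(n)} = x^n/[n]_i!`. -/
def dpow (F : Type*) [Field F] {U : Type*} [Ring U] [Algebra (RatFunc F) U]
    (ri : ℤ) (x : U) (n : ℕ) : U :=
  (qfactF F ri n)⁻¹ • x ^ n

/-- `𝔸₀ ⊆ F(q)`: the rational functions regular at `q = 0`. -/
def A0set (F : Type*) [Field F] : Set (RatFunc F) := {x | x.denom.eval 0 ≠ 0}

/-- `q𝔸₀ ⊆ F(q)`. -/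
def qA0set (F : Type*) [Field F] : Set (RatFunc F) :=
  {x | ∃ y ∈ A0set F, x = RatFunc.X * y}

/-- `𝔸 = F[q,q^{-1}] ⊆ F(q)`: the Laurent polynomials. -/
def ALaurSet (F : Type*) [Field F] : Set (RatFunc F) :=
  {x | ∃ (p : Polynomial F) (n : ℕ), x = algebraMap (Polynomial F) (RatFunc F) p / RatFunc.X ^ n}

/-- Evaluation at `q = 0` (of an element of `𝔸₀`). -/
def ev0 {F : Type*} [Field F] (x : RatFunc F) : F := x.num.eval 0 / x.denom.eval 0

/-- `x ∈ 1 + q ℤ_{≥0}[[q]]`: as a Laurent series, `x` is a power series with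
non-negative integer coefficients and constant term `1`. -/
def posIntSeries (F : Type*) [Field F] (x : RatFunc F) : Prop :=
  ∃ c : ℕ → ℕ, c 0 = 1 ∧
    (x : LaurentSeries F) =
      HahnSeries.ofPowerSeries ℤ F (PowerSeries.mk fun n => (c n : F))

open scoped Classical

/-- The quantum Borcherds–Bozec algebra `U = U_q(𝔤)` over `K = F(q)` attached to a
Borcherds–Cartan datum `(A, P, P^∨, Π, Π^∨)`: the generators `q^h`, `e_{il}`,
`f_{il}` with the defining relations of `Û`, the comultiplication `Δ`, counit `ε`,
antipode `S`, the involution `ω` and the bar involution. -/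
structure QBB (I : Type*) (F : Type*) [Field F] (P Pv : Type*)
    [AddCommGroup P] [AddCommGroup Pv]
    (U : Type*) [Ring U] [Algebra (RatFunc F) U] where
  /- The even symmetrizable Borcherds–Cartan matrix with symmetrizers `r i`. -/
  a : I → I → ℤ
  r : I → ℤ
  r_pos : ∀ i, 0 < r i
  symmetrizable : ∀ i j, r i * a i j = r j * a j i
  diag : ∀ i, a i i = 2 ∨ (a i i ≤ 0 ∧ Even (a i i))
  offdiag : ∀ i j, i ≠ j → a i j ≤ 0
  /- The Borcherds–Cartan datum: weight lattice `P` (a free abelian group), dual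
     weight lattice `P^∨`, pairing, simple coroots `h i`, linearly independent
     simple roots `al i`, fundamental weights `Lam i`. -/
  pair : Pv →+ P →+ ℤ
  hco : I → Pv
  al : I → P
  Lam : I → P
  pair_h_al : ∀ i j, pair (hco i) (al j) = a i j
  pair_h_Lam : ∀ i j, pair (hco j) (Lam i) = if j = i then 1 else 0
  P_free : Module.Free ℤ P
  al_indep : LinearIndependent ℤ al
  /- Generators. -/
  qh : Pv → U
  e : I → ℕ → U
  f : I → ℕ → U
  qh_zero : qh 0 = 1
  qh_add : ∀ g h : Pv, qh (g + h) = qh g * qh h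
  e_zero : ∀ i, e i 0 = 1
  f_zero : ∀ i, f i 0 = 1
  /- Defining relations of `Û`. -/
  qh_e : ∀ (h : Pv) (j : I) (l : ℕ),
    qh h * e j l = ((RatFunc.X : RatFunc F) ^ ((l : ℤ) * pair h (al j))) • (e j l * qh h)
  qh_f : ∀ (h : Pv) (j : I) (l : ℕ),
    qh h * f j l = ((RatFunc.X : RatFunc F) ^ (-((l : ℤ) * pair h (al j)))) • (f j l * qh h)
  serre_e : ∀ (i j : I) (l : ℕ), a i i = 2 → ((a j j = 2 ∧ l = 1) ∨ (a j j ≤ 0 ∧ 1 ≤ l)) →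
    ¬(j = i ∧ l = 1) →
    ∑ rr ∈ Finset.range ((1 - (l : ℤ) * a i j).toNat + 1),
      ((-1 : RatFunc F) ^ rr) •
        (dpow F (r i) (e i 1) rr * e j l * dpow F (r i) (e i 1) ((1 - (l : ℤ) * a i j).toNat - rr))
      = 0
  serre_f : ∀ (i j : I) (l : ℕ), a i i = 2 → ((a j j = 2 ∧ l = 1) ∨ (a j j ≤ 0 ∧ 1 ≤ l)) →
    ¬(j = i ∧ l = 1) →
    ∑ rr ∈ Finset.range ((1 - (l : ℤ) * a i j).toNat + 1),
      ((-1 : RatFunc F) ^ rr) •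
        (dpow F (r i) (f i 1) rr * f j l * dpow F (r i) (f i 1) ((1 - (l : ℤ) * a i j).toNat - rr))
      = 0
  comm_e : ∀ i k j l, a i j = 0 → e i k * e j l = e j l * e i k
  comm_f : ∀ i k j l, a i j = 0 → f i k * f j l = f j l * f i k
  /- Hopf algebra structure. -/
  Delta : U →ₐ[RatFunc F] (U ⊗[RatFunc F] U)
  Delta_qh : ∀ h : Pv, Delta (qh h) = qh h ⊗ₜ[RatFunc F] qh h
  Delta_e : ∀ i l, Delta (e i l) = ∑ m ∈ Finset.range (l + 1),
    ((RatFunc.X : RatFunc F) ^ (((r i * a i i) / 2) * (m : ℤ) * ((l : ℤ) - (m : ℤ)))) •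
      (e i m ⊗ₜ[RatFunc F] (qh ((-(m : ℤ) * r i) • hco i) * e i (l - m)))
  Delta_f : ∀ i l, Delta (f i l) = ∑ m ∈ Finset.range (l + 1),
    ((RatFunc.X : RatFunc F) ^ (-(((r i * a i i) / 2) * (m : ℤ) * ((l : ℤ) - (m : ℤ))))) •
      ((f i m * qh ((((l : ℤ) - (m : ℤ)) * r i) • hco i)) ⊗ₜ[RatFunc F] f i (l - m))
  counit : U →ₐ[RatFunc F] RatFunc F
  counit_qh : ∀ h : Pv, counit (qh h) = 1
  counit_e : ∀ i l, 1 ≤ l → counit (e i l) = 0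
  counit_f : ∀ i l, 1 ≤ l → counit (f i l) = 0
  antipode : U →ₗ[RatFunc F] U
  antipode_antimul : ∀ x y, antipode (x * y) = antipode y * antipode x
  antipode_one : antipode 1 = 1
  antipode_left : ∀ x : U,
    LinearMap.mul' (RatFunc F) U ((TensorProduct.map antipode LinearMap.id) (Delta x))
      = counit x • 1
  antipode_right : ∀ x : U,
    LinearMap.mul' (RatFunc F) U ((TensorProduct.map LinearMap.id antipode) (Delta x))
      = counit x • 1
  /- The involution `ω`. -/
  omega : U →ₐ[RatFunc F] U
  omega_e : ∀ i l, omega (e i l) = f i l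
  omega_f : ∀ i l, omega (f i l) = e i l
  omega_qh : ∀ h : Pv, omega (qh h) = qh (-h)
  /- The bar involution (`q ↦ q^{-1}`, fixing the Chevalley generators). -/
  barQ : RatFunc F →+* RatFunc F
  barQ_X : barQ RatFunc.X = (RatFunc.X : RatFunc F)⁻¹
  barQ_C : ∀ c : F, barQ (algebraMap F (RatFunc F) c) = algebraMap F (RatFunc F) c
  barU : U →+* U
  barU_smul : ∀ (c : RatFunc F) (x : U), barU (c • x) = barQ c • barU x
  barU_invol : ∀ x, barU (barU x) = x
  barU_e : ∀ i l, barU (e i l) = e i l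
  barU_f : ∀ i l, barU (f i l) = f i l

namespace QBB

variable {I F P Pv U : Type*} [Field F] [AddCommGroup P] [AddCommGroup Pv]
  [Ring U] [Algebra (RatFunc F) U]
variable (Q : QBB I F P Pv U)

/-- `(i,l) ∈ I^∞`. -/
def validIdx (i : I) (l : ℕ) : Prop :=
  (Q.a i i = 2 ∧ l = 1) ∨ (Q.a i i ≤ 0 ∧ 1 ≤ l)

/-- The negative part `U^-`, generated by the `f_{il}`. -/
def Um : Subalgebra (RatFunc F) U :=
  Algebra.adjoin (RatFunc F) {x | ∃ i l, Q.validIdx i l ∧ x = Q.f i l}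

/-- The positive part `U^+`, generated by the `e_{il}`. -/
def Up : Subalgebra (RatFunc F) U :=
  Algebra.adjoin (RatFunc F) {x | ∃ i l, Q.validIdx i l ∧ x = Q.e i l}

/-- `K_i^m = q_i^{m h_i}`. -/
def Kpow (i : I) (m : ℤ) : U := Q.qh ((m * Q.r i) • Q.hco i)

/-- `⟨h, β⟩` for `β = Σ c_i α_i` in the root lattice. -/
def pairRt (h : Pv) (β : I →₀ ℤ) : ℤ := β.sum fun i c => c * Q.pair h (Q.al i)

/-- The weight space `U_β = {x | q^h x q^{-h} = q^{⟨h,β⟩} x}`. -/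
def wt (β : I →₀ ℤ) : Submodule (RatFunc F) U where
  carrier := {x | ∀ h : Pv,
    Q.qh h * x = ((RatFunc.X : RatFunc F) ^ (Q.pairRt h β)) • (x * Q.qh h)}
  add_mem' := by
    intro x y hx hy h
    simp only [mul_add, add_mul, hx h, hy h, smul_add]
  zero_mem' := by
    intro h
    simp
  smul_mem' := by
    intro c x hx h
    simp only [Algebra.mul_smul_comm, Algebra.smul_mul_assoc, hx h, smul_comm c]

/-- The divided power `e_i^{(n)}`. -/
def edpow (i : I) (n : ℕ) : U := dpow F (Q.r i) (Q.e i 1) n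

/-- The divided power `f_i^{(n)}`. -/
def fdpow (i : I) (n : ℕ) : U := dpow F (Q.r i) (Q.f i 1) n

/-- The element `λ - α` of `P`, for `α = Σ c_i α_i` in the positive root lattice. -/
def wtSub (lam : P) (α : I →₀ ℤ) : P := lam - α.sum fun i c => c • Q.al i

end QBB
/-- `U_q(𝔤)` together with the family `ν` (with `ν_{il} ∈ 1 + qℤ_{≥0}[[q]]`),
Lusztig's bilinear form `( , )_L` on the negative part, and the (restricted)
comultiplication `ϱ` on `U^-`, multiplicative for the twisted product. -/
structure QBBForm (I : Type*) (F : Type*) [Field F] (P Pv : Type*)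
    [AddCommGroup P] [AddCommGroup Pv]
    (U : Type*) [Ring U] [Algebra (RatFunc F) U]
    extends QBB I F P Pv U where
  nu : I → ℕ → RatFunc F
  nu_pos : ∀ i l, toQBB.validIdx i l → posIntSeries F (nu i l)
  tmulU : (U ⊗[RatFunc F] U) →ₗ[RatFunc F] (U ⊗[RatFunc F] U) →ₗ[RatFunc F]
    (U ⊗[RatFunc F] U)
  tmulU_spec : ∀ (β γ : I →₀ ℤ) (x₁ x₂ y₁ y₂ : U),
    x₂ ∈ toQBB.wt β → y₁ ∈ toQBB.wt γ →
    tmulU (x₁ ⊗ₜ x₂) (y₁ ⊗ₜ y₂) =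
      ((RatFunc.X : RatFunc F) ^
        (-(β.sum fun i m => γ.sum fun j n => m * n * (r i * a i j)))) •
        ((x₁ * y₁) ⊗ₜ[RatFunc F] (x₂ * y₂))
  rhom : U →ₗ[RatFunc F] (U ⊗[RatFunc F] U)
  rhom_one : rhom 1 = 1 ⊗ₜ[RatFunc F] 1
  rhom_f : ∀ i l, toQBB.validIdx i l →
    rhom (f i l) = ∑ m ∈ Finset.range (l + 1),
      ((RatFunc.X : RatFunc F) ^ (-(((r i * a i i) / 2) * (m : ℤ) * ((l : ℤ) - (m : ℤ))))) •
        (f i m ⊗ₜ[RatFunc F] f i (l - m))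
  rhom_mul : ∀ x y, x ∈ toQBB.Um → y ∈ toQBB.Um →
    rhom (x * y) = tmulU (rhom x) (rhom y)
  LF : U →ₗ[RatFunc F] U →ₗ[RatFunc F] RatFunc F
  LF_symm : ∀ x y, LF x y = LF y x
  LF_one : LF 1 1 = 1
  LF_f : ∀ i l, toQBB.validIdx i l → LF (f i l) (f i l) = nu i l
  LF_wt : ∀ β γ : I →₀ ℤ, β ≠ γ → ∀ x ∈ toQBB.wt β, ∀ y ∈ toQBB.wt γ,
    x ∈ toQBB.Um → y ∈ toQBB.Um → LF x y = 0
  LF_mul : ∀ x y z, x ∈ toQBB.Um → y ∈ toQBB.Um → z ∈ toQBB.Um →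
    LF x (y * z) = LinearMap.BilinForm.tmul LF LF (rhom x) (y ⊗ₜ[RatFunc F] z)
namespace QBBForm

variable {I F P Pv U : Type*} [Field F] [AddCommGroup P] [AddCommGroup Pv]
  [Ring U] [Algebra (RatFunc F) U]
variable (Q : QBBForm I F P Pv U)

/-- The subalgebra `⟨f_{i1},…,f_{i,l-1}⟩`. -/
def fBelow (i : I) (l : ℕ) : Subalgebra (RatFunc F) U :=
  Algebra.adjoin (RatFunc F) {x | ∃ k, 1 ≤ k ∧ k < l ∧ x = Q.f i k}

end QBBForm

/-- `U_q(𝔤)` together with its primitive generators `𝚋_{il}` (and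
`𝚊_{il} = ω(𝚋_{il})`), recording their defining properties and the commutation
relation `𝚊_{il}𝚋_{jk} - 𝚋_{jk}𝚊_{il} = δ_{ij}δ_{lk} τ_{il}(K_i^l - K_i^{-l})`. -/
structure QBBPrim (I : Type*) (F : Type*) [Field F] (P Pv : Type*)
    [AddCommGroup P] [AddCommGroup Pv]
    (U : Type*) [Ring U] [Algebra (RatFunc F) U]
    extends QBBForm I F P Pv U where
  bgen : I → ℕ → U
  bgen_re : ∀ i, a i i = 2 → bgen i 1 = f i 1
  bgen_mem : ∀ i l, a i i ≤ 0 → 1 ≤ l →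
    bgen i l ∈ toQBB.Um ∧ bgen i l ∈ toQBB.wt (Finsupp.single i (-(l : ℤ)))
  bgen_tri : ∀ i l, a i i ≤ 0 → 1 ≤ l →
    bgen i l - f i l ∈ QBBForm.fBelow toQBBForm i l
  bgen_orth : ∀ i l, a i i ≤ 0 → 1 ≤ l →
    ∀ z ∈ QBBForm.fBelow toQBBForm i l, LF (bgen i l) z = 0
  bgen_bar : ∀ i l, toQBB.validIdx i l → barU (bgen i l) = bgen i l
  ab_comm : ∀ i l j k, toQBB.validIdx i l → toQBB.validIdx j k →
    omega (bgen i l) * bgen j k - bgen j k * omega (bgen i l) =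
      if i = j ∧ l = k then LF (bgen i l) (bgen i l) • (toQBB.Kpow i l - toQBB.Kpow i (-(l : ℤ)))
      else 0

namespace QBBPrim

variable {I F P Pv U : Type*} [Field F] [AddCommGroup P] [AddCommGroup Pv]
  [Ring U] [Algebra (RatFunc F) U]
variable (Q : QBBPrim I F P Pv U)

/-- The primitive generator `𝚊_{il} = ω(𝚋_{il})`. -/
def agen (i : I) (l : ℕ) : U := Q.omega (Q.bgen i l)

/-- `τ_{il} = (𝚋_{il},𝚋_{il})_L`. -/
def tau (i : I) (l : ℕ) : RatFunc F := Q.LF (Q.bgen i l) (Q.bgen i l)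

/-- `𝚋_{i,𝐜} = 𝚋_{ic₁} ⋯ 𝚋_{ic_t}` for a list `𝐜 = (c₁,…,c_t)`. -/
def bprod (i : I) (c : List ℕ) : U := (c.map (Q.bgen i)).prod

end QBBPrim
section StarAux

open scoped TensorProduct

variable {I P Pv U : Type*} [AddCommGroup P] [AddCommGroup Pv]
  [Ring U] [Algebra (RatFunc ℚ) U]

namespace StarAux

local notation "𝕂" => RatFunc ℚ

lemma st_one (st : U →ₗ[𝕂] U)
    (st_antimul : ∀ x y : U, st (x * y) = st y * st x)
    (st_invol : ∀ x : U, st (st x) = x) : st (1 : U) = 1 := by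
  have h := st_antimul (st 1) 1
  rw [mul_one] at h
  rw [st_invol] at h
  rw [mul_one] at h
  exact h.symm

lemma pairRt_zero (Qb : QBB I ℚ P Pv U) (h : Pv) : Qb.pairRt h 0 = 0 :=
  Finsupp.sum_zero_index

lemma pairRt_add (Qb : QBB I ℚ P Pv U) (h : Pv) (β γ : I →₀ ℤ) :
    Qb.pairRt h (β + γ) = Qb.pairRt h β + Qb.pairRt h γ :=
  Finsupp.sum_add_index' (fun _ => zero_mul _) (fun _ b c => add_mul b c _)

lemma pairRt_single (Qb : QBB I ℚ P Pv U) (h : Pv) (i : I) (c : ℤ) :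
    Qb.pairRt h (Finsupp.single i c) = c * Qb.pair h (Qb.al i) :=
  Finsupp.sum_single_index (zero_mul _)

lemma pairRt_neg (Qb : QBB I ℚ P Pv U) (h : Pv) (β : I →₀ ℤ) :
    Qb.pairRt (-h) β = - Qb.pairRt h β := by
  unfold QBB.pairRt
  rw [Finsupp.sum, Finsupp.sum, ← Finset.sum_neg_distrib]
  refine Finset.sum_congr rfl fun i _ => ?_
  simp [map_neg, mul_neg]

lemma mem_wt {Qb : QBB I ℚ P Pv U} {β : I →₀ ℤ} {x : U} :
    x ∈ Qb.wt β ↔ ∀ h : Pv,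
      Qb.qh h * x = ((RatFunc.X : 𝕂) ^ (Qb.pairRt h β)) • (x * Qb.qh h) :=
  Iff.rfl

lemma wt_one (Qb : QBB I ℚ P Pv U) : (1 : U) ∈ Qb.wt 0 := by
  rw [mem_wt]
  intro h
  rw [pairRt_zero, zpow_zero, one_smul, mul_one, one_mul]

lemma wt_f (Qb : QBB I ℚ P Pv U) (i : I) (l : ℕ) :
    Qb.f i l ∈ Qb.wt (Finsupp.single i (-(l : ℤ))) := by
  rw [mem_wt]
  intro h
  rw [Qb.qh_f h i l, pairRt_single]
  norm_num

lemma wt_mul (Qb : QBB I ℚ P Pv U) {β γ : I →₀ ℤ} {x y : U}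
    (hx : x ∈ Qb.wt β) (hy : y ∈ Qb.wt γ) : x * y ∈ Qb.wt (β + γ) := by
  rw [mem_wt] at hx hy ⊢
  intro h
  calc Qb.qh h * (x * y) = (Qb.qh h * x) * y := by rw [mul_assoc]
    _ = ((RatFunc.X : 𝕂) ^ (Qb.pairRt h β)) • (x * (Qb.qh h * y)) := by
        rw [hx h, smul_mul_assoc, mul_assoc]
    _ = ((RatFunc.X : 𝕂) ^ (Qb.pairRt h β)) •
          (x * (((RatFunc.X : 𝕂) ^ (Qb.pairRt h γ)) • (y * Qb.qh h))) := by rw [hy h]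
    _ = (((RatFunc.X : 𝕂) ^ (Qb.pairRt h β)) * ((RatFunc.X : 𝕂) ^ (Qb.pairRt h γ))) •
          (x * y * Qb.qh h) := by rw [mul_smul_comm, smul_smul, mul_assoc]
    _ = ((RatFunc.X : 𝕂) ^ (Qb.pairRt h (β + γ))) • (x * y * Qb.qh h) := by
        rw [← zpow_add₀ RatFunc.X_ne_zero, pairRt_add]

lemma wt_st (Qb : QBB I ℚ P Pv U) (st : U →ₗ[𝕂] U)
    (st_antimul : ∀ x y : U, st (x * y) = st y * st x)
    (st_qh : ∀ h : Pv, st (Qb.qh h) = Qb.qh (-h))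
    {β : I →₀ ℤ} {x : U} (hx : x ∈ Qb.wt β) : st x ∈ Qb.wt β := by
  rw [mem_wt] at hx ⊢
  have key : ∀ h : Pv, st x * Qb.qh (-h) =
      ((RatFunc.X : 𝕂) ^ (Qb.pairRt h β)) • (Qb.qh (-h) * st x) := by
    intro h
    have := congrArg st (hx h)
    rw [st_antimul, st_qh, map_smul, st_antimul, st_qh] at this
    exact this
  intro h
  have h2 := key (-h)
  rw [neg_neg, pairRt_neg] at h2
  have h3 := congrArg (fun z => ((RatFunc.X : 𝕂) ^ (Qb.pairRt h β)) • z) h2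
  simp only [smul_smul, ← zpow_add₀ (RatFunc.X_ne_zero (K := ℚ))] at h3
  rw [add_neg_cancel, zpow_zero, one_smul] at h3
  exact h3.symm


/-- The generating set of `U^-`. -/
def genSet (Q : QBBPrim I ℚ P Pv U) : Set U :=
  {x | ∃ i l, Q.toQBB.validIdx i l ∧ x = Q.f i l}

lemma Um_eq (Q : QBBPrim I ℚ P Pv U) :
    Q.toQBB.Um = Algebra.adjoin (RatFunc ℚ) (genSet Q) := rfl

lemma valid_le {Q : QBBPrim I ℚ P Pv U} {i : I} {l m : ℕ}
    (hv : Q.toQBB.validIdx i l) (hm : m ≤ l) (hm0 : 1 ≤ m) :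
    Q.toQBB.validIdx i m := by
  rcases hv with ⟨h2, rfl⟩ | ⟨h0, h1⟩
  · exact Or.inl ⟨h2, le_antisymm hm hm0⟩
  · exact Or.inr ⟨h0, hm0⟩

lemma f_mem_genSet {Q : QBBPrim I ℚ P Pv U} {i : I} {l : ℕ}
    (hv : Q.toQBB.validIdx i l) : Q.f i l ∈ genSet Q := ⟨i, l, hv, rfl⟩

lemma f_mem_Um {Q : QBBPrim I ℚ P Pv U} {i : I} {l m : ℕ}
    (hv : Q.toQBB.validIdx i l) (hm : m ≤ l) : Q.f i m ∈ Q.toQBB.Um := by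
  rcases Nat.eq_zero_or_pos m with rfl | hm0
  · rw [Q.f_zero]
    exact one_mem _
  · exact Algebra.subset_adjoin (f_mem_genSet (valid_le hv hm hm0))

lemma st_f_le {Q : QBBPrim I ℚ P Pv U} (st : U →ₗ[𝕂] U)
    (st_antimul : ∀ x y : U, st (x * y) = st y * st x)
    (st_invol : ∀ x : U, st (st x) = x)
    (st_f : ∀ i l, Q.toQBB.validIdx i l → st (Q.f i l) = Q.f i l)
    {i : I} {l m : ℕ} (hv : Q.toQBB.validIdx i l) (hm : m ≤ l) :
    st (Q.f i m) = Q.f i m := by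
  rcases Nat.eq_zero_or_pos m with rfl | hm0
  · rw [Q.f_zero]
    exact st_one st st_antimul st_invol
  · exact st_f i m (valid_le hv hm hm0)

lemma st_mem_Um {Q : QBBPrim I ℚ P Pv U} (st : U →ₗ[𝕂] U)
    (st_antimul : ∀ x y : U, st (x * y) = st y * st x)
    (st_invol : ∀ x : U, st (st x) = x)
    (st_f : ∀ i l, Q.toQBB.validIdx i l → st (Q.f i l) = Q.f i l)
    {x : U} (hx : x ∈ Q.toQBB.Um) : st x ∈ Q.toQBB.Um := by
  induction hx using Algebra.adjoin_induction with
  | mem x hx =>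
    obtain ⟨i, l, hv, rfl⟩ := hx
    rw [st_f i l hv]
    exact Algebra.subset_adjoin ⟨i, l, hv, rfl⟩
  | algebraMap r =>
    rw [Algebra.algebraMap_eq_smul_one, map_smul, st_one st st_antimul st_invol]
    exact Subalgebra.smul_mem _ (one_mem _) _
  | add x y hx hy ihx ihy =>
    rw [map_add]; exact add_mem ihx ihy
  | mul x y hx hy ihx ihy =>
    rw [st_antimul]; exact mul_mem ihy ihx


/-- Pure tensors of weight vectors in `U^- ⊗ U^-`. -/
def Wset (Q : QBBPrim I ℚ P Pv U) : Set (U ⊗[𝕂] U) :=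
  {t | ∃ (x₁ x₂ : U) (β γ : I →₀ ℤ), x₁ ∈ Q.toQBB.Um ∧ x₂ ∈ Q.toQBB.Um ∧
    x₁ ∈ Q.toQBB.wt β ∧ x₂ ∈ Q.toQBB.wt γ ∧ t = x₁ ⊗ₜ[𝕂] x₂}

def W (Q : QBBPrim I ℚ P Pv U) : Submodule 𝕂 (U ⊗[𝕂] U) :=
  Submodule.span 𝕂 (Wset Q)

def sigma (st : U →ₗ[𝕂] U) : (U ⊗[𝕂] U) →ₗ[𝕂] (U ⊗[𝕂] U) :=
  (TensorProduct.map st st).comp (TensorProduct.comm 𝕂 U U).toLinearMap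

lemma sigma_tmul (st : U →ₗ[𝕂] U) (a b : U) :
    sigma st (a ⊗ₜ[𝕂] b) = st b ⊗ₜ[𝕂] st a := rfl

lemma Ssym (Qb : QBB I ℚ P Pv U) (β γ : I →₀ ℤ) :
    (β.sum fun i m => γ.sum fun j n => m * n * (Qb.r i * Qb.a i j))
      = γ.sum fun i m => β.sum fun j n => m * n * (Qb.r i * Qb.a i j) := by
  rw [Finsupp.sum_comm]
  refine Finsupp.sum_congr fun j _ => Finsupp.sum_congr fun i _ => ?_
  have hsym := Qb.symmetrizable i j
  linear_combination (β i * γ j) * hsym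

lemma tmulU_pure_mem (Q : QBBPrim I ℚ P Pv U) {x₁ x₂ y₁ y₂ : U}
    {β₁ β₂ γ₁ γ₂ : I →₀ ℤ}
    (h1 : x₁ ∈ Q.toQBB.Um) (h2 : x₂ ∈ Q.toQBB.Um)
    (h3 : y₁ ∈ Q.toQBB.Um) (h4 : y₂ ∈ Q.toQBB.Um)
    (w1 : x₁ ∈ Q.toQBB.wt β₁) (w2 : x₂ ∈ Q.toQBB.wt β₂)
    (w3 : y₁ ∈ Q.toQBB.wt γ₁) (w4 : y₂ ∈ Q.toQBB.wt γ₂) :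
    Q.tmulU (x₁ ⊗ₜ[𝕂] x₂) (y₁ ⊗ₜ[𝕂] y₂) ∈ W Q := by
  rw [Q.tmulU_spec β₂ γ₁ x₁ x₂ y₁ y₂ w2 w3]
  exact Submodule.smul_mem _ _ (Submodule.subset_span
    ⟨x₁ * y₁, x₂ * y₂, β₁ + γ₁, β₂ + γ₂, mul_mem h1 h3, mul_mem h2 h4,
     wt_mul _ w1 w3, wt_mul _ w2 w4, rfl⟩)

lemma tmulU_W (Q : QBBPrim I ℚ P Pv U) :
    ∀ u ∈ W Q, ∀ v ∈ W Q, Q.tmulU u v ∈ W Q := by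
  intro u hu
  have hu' : u ∈ Submodule.span 𝕂 (Wset Q) := hu
  clear hu
  induction hu' using Submodule.span_induction with
  | mem u hu =>
    intro v hv
    have hv' : v ∈ Submodule.span 𝕂 (Wset Q) := hv
    clear hv
    induction hv' using Submodule.span_induction with
    | mem v hv =>
      obtain ⟨a₁, a₂, β₁, β₂, h1, h2, w1, w2, rfl⟩ := hu
      obtain ⟨b₁, b₂, γ₁, γ₂, h3, h4, w3, w4, rfl⟩ := hv
      exact tmulU_pure_mem Q h1 h2 h3 h4 w1 w2 w3 w4
    | zero => rw [map_zero]; exact zero_mem _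
    | add v w _ _ ihv ihw => rw [map_add]; exact add_mem ihv ihw
    | smul c v _ ihv => rw [map_smul]; exact Submodule.smul_mem _ _ ihv
  | zero => intro v _; rw [map_zero, LinearMap.zero_apply]; exact zero_mem _
  | add u w _ _ ihu ihw =>
    intro v hv
    rw [map_add, LinearMap.add_apply]
    exact add_mem (ihu v hv) (ihw v hv)
  | smul c u _ ihu =>
    intro v hv
    rw [map_smul, LinearMap.smul_apply]
    exact Submodule.smul_mem _ _ (ihu v hv)

section Sigma

variable (Q : QBBPrim I ℚ P Pv U) (st : U →ₗ[𝕂] U)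
  (st_antimul : ∀ x y : U, st (x * y) = st y * st x)
  (st_invol : ∀ x : U, st (st x) = x)
  (st_f : ∀ i l, Q.toQBB.validIdx i l → st (Q.f i l) = Q.f i l)
  (st_qh : ∀ h : Pv, st (Q.qh h) = Q.qh (-h))

include st_antimul st_invol st_f st_qh

lemma sigma_W : ∀ u ∈ W Q, sigma st u ∈ W Q := by
  intro u hu
  have hu' : u ∈ Submodule.span 𝕂 (Wset Q) := hu
  clear hu
  induction hu' using Submodule.span_induction with
  | mem u hu =>
    obtain ⟨a₁, a₂, β₁, β₂, h1, h2, w1, w2, rfl⟩ := hu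
    rw [sigma_tmul]
    exact Submodule.subset_span ⟨st a₂, st a₁, β₂, β₁,
      st_mem_Um st st_antimul st_invol st_f h2,
      st_mem_Um st st_antimul st_invol st_f h1,
      wt_st Q.toQBB st st_antimul st_qh w2,
      wt_st Q.toQBB st st_antimul st_qh w1, rfl⟩
  | zero => rw [map_zero]; exact zero_mem _
  | add u v _ _ ihu ihv => rw [map_add]; exact add_mem ihu ihv
  | smul c u _ ihu => rw [map_smul]; exact Submodule.smul_mem _ _ ihu

lemma sigma_tmulU : ∀ u ∈ W Q, ∀ v ∈ W Q,
    sigma st (Q.tmulU u v) = Q.tmulU (sigma st v) (sigma st u) := by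
  intro u hu
  have hu' : u ∈ Submodule.span 𝕂 (Wset Q) := hu
  clear hu
  induction hu' using Submodule.span_induction with
  | mem u hu =>
    intro v hv
    have hv' : v ∈ Submodule.span 𝕂 (Wset Q) := hv
    clear hv
    induction hv' using Submodule.span_induction with
    | mem v hv =>
      obtain ⟨x₁, x₂, β₁, β₂, h1, h2, w1, w2, rfl⟩ := hu
      obtain ⟨y₁, y₂, γ₁, γ₂, h3, h4, w3, w4, rfl⟩ := hv
      rw [Q.tmulU_spec β₂ γ₁ x₁ x₂ y₁ y₂ w2 w3, map_smul, sigma_tmul,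
        sigma_tmul, sigma_tmul, st_antimul, st_antimul,
        Q.tmulU_spec γ₁ β₂ (st y₂) (st y₁) (st x₂) (st x₁)
          (wt_st Q.toQBB st st_antimul st_qh w3)
          (wt_st Q.toQBB st st_antimul st_qh w2)]
      congr 2
      rw [Ssym]
    | zero => simp
    | add v w _ _ ihv ihw =>
      simp only [map_add, LinearMap.add_apply, LinearMap.map_add₂]
      rw [ihv, ihw]
    | smul c v _ ihv =>
      simp only [map_smul, LinearMap.smul_apply, LinearMap.map_smul₂]
      rw [ihv]
  | zero => intro v _; simp
  | add u w _ _ ihu ihw =>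
    intro v hv
    simp only [map_add, LinearMap.add_apply, LinearMap.map_add₂]
    rw [ihu v hv, ihw v hv]
  | smul c u _ ihu =>
    intro v hv
    simp only [map_smul, LinearMap.smul_apply, LinearMap.map_smul₂]
    rw [ihu v hv]

end Sigma


section Rhom

variable (Q : QBBPrim I ℚ P Pv U) (st : U →ₗ[𝕂] U)
  (st_antimul : ∀ x y : U, st (x * y) = st y * st x)
  (st_invol : ∀ x : U, st (st x) = x)
  (st_f : ∀ i l, Q.toQBB.validIdx i l → st (Q.f i l) = Q.f i l)
  (st_qh : ∀ h : Pv, st (Q.qh h) = Q.qh (-h))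

lemma sum_reflect {M : Type*} [AddCommMonoid M] (l : ℕ) (F : ℕ → M) :
    ∑ m ∈ Finset.range (l + 1), F (l - m) = ∑ m ∈ Finset.range (l + 1), F m := by
  have := Finset.sum_range_reflect F (l + 1)
  simpa using this

lemma rhom_f_mem_W (i : I) (l : ℕ) (hv : Q.toQBB.validIdx i l) :
    Q.rhom (Q.f i l) ∈ W Q := by
  rw [Q.rhom_f i l hv]
  refine Submodule.sum_mem _ fun m hm => Submodule.smul_mem _ _ (Submodule.subset_span ?_)
  have hm' : m ≤ l := Nat.lt_succ_iff.mp (Finset.mem_range.mp hm)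
  exact ⟨Q.f i m, Q.f i (l - m), Finsupp.single i (-(m : ℤ)),
    Finsupp.single i (-((l - m : ℕ) : ℤ)),
    f_mem_Um hv hm', f_mem_Um hv (Nat.sub_le _ _), wt_f _ i m, wt_f _ i (l - m), rfl⟩

include st_antimul st_invol st_f in
lemma rhom_f_flip (i : I) (l : ℕ) (hv : Q.toQBB.validIdx i l) :
    sigma st (Q.rhom (Q.f i l)) = Q.rhom (Q.f i l) := by
  have hstf : ∀ m, m ≤ l → st (Q.f i m) = Q.f i m := fun m hm =>
    st_f_le st st_antimul st_invol st_f hv hm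
  rw [Q.rhom_f i l hv, map_sum]
  have step1 : ∀ m ∈ Finset.range (l + 1),
      sigma st (((RatFunc.X : 𝕂) ^
          (-(((Q.r i * Q.a i i) / 2) * (m : ℤ) * ((l : ℤ) - (m : ℤ))))) •
        (Q.f i m ⊗ₜ[𝕂] Q.f i (l - m)))
      = ((RatFunc.X : 𝕂) ^
          (-(((Q.r i * Q.a i i) / 2) * (m : ℤ) * ((l : ℤ) - (m : ℤ))))) •
        (Q.f i (l - m) ⊗ₜ[𝕂] Q.f i m) := by
    intro m hm
    have hm' : m ≤ l := Nat.lt_succ_iff.mp (Finset.mem_range.mp hm)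
    rw [map_smul, sigma_tmul, hstf m hm', hstf (l - m) (Nat.sub_le _ _)]
  rw [Finset.sum_congr rfl step1]
  rw [← sum_reflect l (fun m => ((RatFunc.X : 𝕂) ^
      (-(((Q.r i * Q.a i i) / 2) * (m : ℤ) * ((l : ℤ) - (m : ℤ))))) •
    (Q.f i (l - m) ⊗ₜ[𝕂] Q.f i m))]
  refine Finset.sum_congr rfl fun m hm => ?_
  have hm' : m ≤ l := Nat.lt_succ_iff.mp (Finset.mem_range.mp hm)
  have hcast : ((l - m : ℕ) : ℤ) = (l : ℤ) - (m : ℤ) := by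
    exact Nat.cast_sub hm'
  rw [Nat.sub_sub_self hm', hcast,
    show (-(((Q.r i * Q.a i i) / 2) * ((l : ℤ) - (m : ℤ)) * ((l : ℤ) - ((l : ℤ) - (m : ℤ)))))
        = (-(((Q.r i * Q.a i i) / 2) * (m : ℤ) * ((l : ℤ) - (m : ℤ)))) from by ring]

include st_antimul st_invol st_f st_qh in
lemma rhom_flip : ∀ x, x ∈ Q.toQBB.Um →
    Q.rhom x ∈ W Q ∧ Q.rhom (st x) = sigma st (Q.rhom x) := by
  intro x hx
  induction hx using Algebra.adjoin_induction with
  | mem x hx =>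
    obtain ⟨i, l, hv, rfl⟩ := hx
    refine ⟨rhom_f_mem_W Q i l hv, ?_⟩
    rw [st_f i l hv, rhom_f_flip Q st st_antimul st_invol st_f i l hv]
  | algebraMap r =>
    have h1 : Q.rhom ((algebraMap 𝕂 U) r) = r • ((1 : U) ⊗ₜ[𝕂] (1 : U)) := by
      rw [Algebra.algebraMap_eq_smul_one, map_smul, Q.rhom_one]
    constructor
    · rw [h1]
      exact Submodule.smul_mem _ _ (Submodule.subset_span
        ⟨1, 1, 0, 0, one_mem _, one_mem _, wt_one _, wt_one _, rfl⟩)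
    · rw [Algebra.algebraMap_eq_smul_one, map_smul, st_one st st_antimul st_invol,
        map_smul, Q.rhom_one, map_smul, sigma_tmul, st_one st st_antimul st_invol]
  | add x y hx hy ihx ihy =>
    refine ⟨by rw [map_add]; exact add_mem ihx.1 ihy.1, ?_⟩
    simp only [map_add, ihx.2, ihy.2]
  | mul x y hx hy ihx ihy =>
    have hsx := st_mem_Um st st_antimul st_invol st_f hx
    have hsy := st_mem_Um st st_antimul st_invol st_f hy
    refine ⟨by rw [Q.rhom_mul x y hx hy]; exact tmulU_W Q _ ihx.1 _ ihy.1, ?_⟩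
    rw [st_antimul, Q.rhom_mul _ _ hsy hsx, ihx.2, ihy.2, Q.rhom_mul x y hx hy,
      sigma_tmulU Q st st_antimul st_invol st_f st_qh _ ihx.1 _ ihy.1]

end Rhom


lemma tmulform_eval (Q : QBBPrim I ℚ P Pv U) (a b c d : U) :
    LinearMap.BilinForm.tmul Q.LF Q.LF (a ⊗ₜ[𝕂] b) (c ⊗ₜ[𝕂] d)
      = Q.LF b d * Q.LF a c := rfl

lemma prod_mem_Um (Q : QBBPrim I ℚ P Pv U) (L : List U)
    (hL : ∀ g ∈ L, g ∈ genSet Q) : L.prod ∈ Q.toQBB.Um :=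
  list_prod_mem fun g hg => Algebra.subset_adjoin (hL g hg)

section FormLemmas

variable (Q : QBBPrim I ℚ P Pv U) (st : U →ₗ[𝕂] U)
  (st_antimul : ∀ x y : U, st (x * y) = st y * st x)
  (st_invol : ∀ x : U, st (st x) = x)
  (st_f : ∀ i l, Q.toQBB.validIdx i l → st (Q.f i l) = Q.f i l)
  (st_qh : ∀ h : Pv, st (Q.qh h) = Q.qh (-h))

include st_antimul st_invol st_f

lemma lemB : ∀ L : List U, (∀ g ∈ L, g ∈ genSet Q) →
    ∀ z : U, (z = 1 ∨ z ∈ genSet Q) → Q.LF (st L.prod) z = Q.LF L.prod z := by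
  intro L
  induction L with
  | nil =>
    intro _ z _
    rw [List.prod_nil, st_one st st_antimul st_invol]
  | cons g L' ih =>
    intro hL z hz
    obtain ⟨j, k, hvjk, rfl⟩ := hL g List.mem_cons_self
    have hL' : ∀ g ∈ L', g ∈ genSet Q := fun g hg => hL g (List.mem_cons_of_mem _ hg)
    have hp' : L'.prod ∈ Q.toQBB.Um := prod_mem_Um Q L' hL'
    have hsp' : st L'.prod ∈ Q.toQBB.Um := st_mem_Um st st_antimul st_invol st_f hp'
    have hfjk : Q.f j k ∈ Q.toQBB.Um := Algebra.subset_adjoin (f_mem_genSet hvjk)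
    rw [List.prod_cons, st_antimul, st_f j k hvjk]
    rcases hz with rfl | ⟨i, l, hvil, rfl⟩
    · -- z = 1
      have e1 : Q.LF (st L'.prod * Q.f j k) 1
          = Q.LF 1 (Q.f j k) * Q.LF 1 (st L'.prod) := by
        rw [Q.LF_symm, Q.LF_mul 1 (st L'.prod) (Q.f j k) (one_mem _) hsp' hfjk,
          Q.rhom_one, tmulform_eval]
      have e2 : Q.LF (Q.f j k * L'.prod) 1
          = Q.LF 1 L'.prod * Q.LF 1 (Q.f j k) := by
        rw [Q.LF_symm, Q.LF_mul 1 (Q.f j k) L'.prod (one_mem _) hfjk hp',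
          Q.rhom_one, tmulform_eval]
      have e3 : Q.LF 1 (st L'.prod) = Q.LF 1 L'.prod := by
        rw [Q.LF_symm, ih hL' 1 (Or.inl rfl), Q.LF_symm]
      rw [e1, e2, e3]
      ring
    · -- z = f i l
      have hfil : Q.f i l ∈ Q.toQBB.Um := Algebra.subset_adjoin (f_mem_genSet hvil)
      rw [Q.LF_symm, Q.LF_mul (Q.f i l) (st L'.prod) (Q.f j k) hfil hsp' hfjk,
        Q.LF_symm (Q.f j k * L'.prod),
        Q.LF_mul (Q.f i l) (Q.f j k) L'.prod hfil hfjk hp',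
        Q.rhom_f i l hvil]
      simp only [map_sum, map_smul, LinearMap.sum_apply, LinearMap.smul_apply,
        tmulform_eval, smul_eq_mul]
      have key : ∀ m, m ≤ l → Q.LF (Q.f i m) (st L'.prod) = Q.LF (Q.f i m) L'.prod := by
        intro m hm
        have hz : Q.f i m = 1 ∨ Q.f i m ∈ genSet Q := by
          rcases Nat.eq_zero_or_pos m with rfl | hm0
          · exact Or.inl (Q.f_zero i)
          · exact Or.inr (f_mem_genSet (valid_le hvil hm hm0))
        rw [Q.LF_symm, ih hL' _ hz, Q.LF_symm]
      rw [Finset.sum_congr rfl (fun m hm => by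
        rw [key m (Nat.lt_succ_iff.mp (Finset.mem_range.mp hm))])]
      rw [← sum_reflect l (fun m => (RatFunc.X : 𝕂) ^
            (-(((Q.r i * Q.a i i) / 2) * (m : ℤ) * ((l : ℤ) - (m : ℤ)))) *
          (Q.LF (Q.f i (l - m)) L'.prod * Q.LF (Q.f i m) (Q.f j k)))]
      refine Finset.sum_congr rfl fun m hm => ?_
      have hm' : m ≤ l := Nat.lt_succ_iff.mp (Finset.mem_range.mp hm)
      have hcast : ((l - m : ℕ) : ℤ) = (l : ℤ) - (m : ℤ) := Nat.cast_sub hm'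
      rw [Nat.sub_sub_self hm', hcast,
        show (-(((Q.r i * Q.a i i) / 2) * ((l : ℤ) - (m : ℤ)) *
            ((l : ℤ) - ((l : ℤ) - (m : ℤ)))))
          = (-(((Q.r i * Q.a i i) / 2) * (m : ℤ) * ((l : ℤ) - (m : ℤ)))) from by ring]
      ring

omit st_antimul st_invol st_f in
lemma mem_span_closure {x : U} (hx : x ∈ Q.toQBB.Um) :
    x ∈ Submodule.span 𝕂 ((Submonoid.closure (genSet Q) : Submonoid U) : Set U) := by
  rw [← Algebra.adjoin_eq_span]
  exact (Subalgebra.mem_toSubmodule _).mpr hx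

lemma lemB1 : ∀ x ∈ Q.toQBB.Um, ∀ z : U, (z = 1 ∨ z ∈ genSet Q) →
    Q.LF (st x) z = Q.LF x z := by
  intro x hx z hz
  have hx' := mem_span_closure Q hx
  clear hx
  induction hx' using Submodule.span_induction with
  | mem x hxm =>
    obtain ⟨L, hL, rfl⟩ := Submonoid.exists_list_of_mem_closure hxm
    exact lemB Q st st_antimul st_invol st_f L hL z hz
  | zero => simp
  | add x y _ _ ih1 ih2 =>
    simp only [map_add, LinearMap.add_apply]
    rw [ih1, ih2]
  | smul c x _ ih1 =>
    simp only [map_smul, LinearMap.smul_apply]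
    rw [ih1]

include st_qh in
lemma lemM : ∀ L : List U, (∀ g ∈ L, g ∈ genSet Q) →
    ∀ x ∈ Q.toQBB.Um, Q.LF (st x) (st L.prod) = Q.LF x L.prod := by
  intro L
  induction L with
  | nil =>
    intro _ x hx
    rw [List.prod_nil, st_one st st_antimul st_invol]
    exact lemB1 Q st st_antimul st_invol st_f x hx 1 (Or.inl rfl)
  | cons g L' ih =>
    intro hL x hx
    obtain ⟨j, k, hvjk, rfl⟩ := hL g List.mem_cons_self
    have hL' : ∀ g ∈ L', g ∈ genSet Q := fun g hg => hL g (List.mem_cons_of_mem _ hg)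
    have hp' : L'.prod ∈ Q.toQBB.Um := prod_mem_Um Q L' hL'
    have hsp' : st L'.prod ∈ Q.toQBB.Um := st_mem_Um st st_antimul st_invol st_f hp'
    have hfjk : Q.f j k ∈ Q.toQBB.Um := Algebra.subset_adjoin (f_mem_genSet hvjk)
    have hsx : st x ∈ Q.toQBB.Um := st_mem_Um st st_antimul st_invol st_f hx
    rw [List.prod_cons, st_antimul, st_f j k hvjk,
      Q.LF_mul (st x) (st L'.prod) (Q.f j k) hsx hsp' hfjk]
    obtain ⟨hW, hflip⟩ := rhom_flip Q st st_antimul st_invol st_f st_qh x hx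
    rw [hflip]
    have claim : ∀ w ∈ W Q,
        (LinearMap.BilinForm.tmul Q.LF Q.LF) (sigma st w) (st L'.prod ⊗ₜ[𝕂] Q.f j k)
          = (LinearMap.BilinForm.tmul Q.LF Q.LF) w (Q.f j k ⊗ₜ[𝕂] L'.prod) := by
      intro w hw
      have hw' : w ∈ Submodule.span 𝕂 (Wset Q) := hw
      clear hw
      induction hw' using Submodule.span_induction with
      | mem w hwm =>
        obtain ⟨x₁, x₂, β₁, β₂, h1, h2, w1, w2, rfl⟩ := hwm
        rw [sigma_tmul, tmulform_eval, tmulform_eval,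
          lemB1 Q st st_antimul st_invol st_f x₁ h1 (Q.f j k)
            (Or.inr (f_mem_genSet hvjk)),
          ih hL' x₂ h2]
        ring
      | zero => simp
      | add w₁ w₂ _ _ ih1 ih2 =>
        simp only [map_add, LinearMap.add_apply]
        rw [ih1, ih2]
      | smul c w _ ih1 =>
        simp only [map_smul, LinearMap.smul_apply]
        rw [ih1]
    rw [claim (Q.rhom x) hW, ← Q.LF_mul x (Q.f j k) L'.prod hx hfjk hp']

include st_qh in
set_option synthInstance.maxHeartbeats 1000000 in
lemma main : ∀ x y : U, x ∈ Q.toQBB.Um → y ∈ Q.toQBB.Um →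
    Q.LF (st x) (st y) = Q.LF x y := by
  intro x y hx hy
  have hy' := mem_span_closure Q hy
  clear hy
  induction hy' using Submodule.span_induction with
  | mem y hym =>
    obtain ⟨L, hL, rfl⟩ := Submonoid.exists_list_of_mem_closure hym
    exact lemM Q st st_antimul st_invol st_f st_qh L hL x hx
  | zero => simp
  | add y₁ y₂ _ _ ih1 ih2 =>
    simp only [map_add]
    rw [ih1, ih2]
  | smul c y₁ _ ih1 =>
    rw [map_smul st, map_smul (Q.LF (st x)), map_smul (Q.LF x), ih1]

end FormLemmas

end StarAux

end StarAux
/-- the `F(q)`-linear anti-involution `*` of `U_q(𝔤)` with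
`e_{il}* = e_{il}`, `f_{il}* = f_{il}`, `(q^h)* = q^{-h}` is an isometry of
Lusztig's form on `U^-`: `(P*,Q*)_L = (P,Q)_L`. -/
theorem star_invariance_of_form {I P Pv U : Type*}
    [AddCommGroup P] [AddCommGroup Pv] [Ring U] [Algebra (RatFunc ℚ) U]
    (Q : QBBPrim I ℚ P Pv U)
    (st : U →ₗ[RatFunc ℚ] U)
    (st_antimul : ∀ x y : U, st (x * y) = st y * st x)
    (st_invol : ∀ x : U, st (st x) = x)
    (st_e : ∀ i l, Q.toQBB.validIdx i l → st (Q.e i l) = Q.e i l)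
    (st_f : ∀ i l, Q.toQBB.validIdx i l → st (Q.f i l) = Q.f i l)
    (st_qh : ∀ h : Pv, st (Q.qh h) = Q.qh (-h)) :
    ∀ x y : U, x ∈ Q.toQBB.Um → y ∈ Q.toQBB.Um → Q.LF (st x) (st y) = Q.LF x y :=
  StarAux.main Q st st_antimul st_invol st_f st_qh
end
end
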